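/- arXiv:2506.12534 — 7 statements merged into one kernel-verified Lean document; each statement's English description precedes it below -/
import Mathlib

section
/- Let n ≥ 1, E = EuclideanSpace ℝ (Fin n), and μ a Borel probability measure on E satisfying the standing integrability assumption. Let σ > 0, A : E ≃ₗᵢ[ℝ] E a linear isometric equivalence, b ∈ E, and g : E → E the σ-scaled isometry g(x) = σ • A x + b. Then for every u ∈ E with ‖u‖ < 1, the (A u)-quantile set of the pushforward measure μ.map g equals the image under g of the u-quantile set of μ: argmin_{p∈E} ∫ ρ_{A u}(y, p) d(μ.map g)(y) = g '' (argmin_{p∈E} ∫ ρ_u(x, p) dμ(x)). (Euclidean case of Proposition 2.2: equivariance of quantile sets under scaled isometries.) -/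
open MeasureTheory Filter Topology

/-- The data-based geometric quantile loss in Euclidean space:
`ρ_u(x,p) = ‖p − x‖ − ⟪u, p − x⟫`. -/
noncomputable def quantileLoss {n : ℕ} (u x p : EuclideanSpace ℝ (Fin n)) : ℝ :=
  ‖p - x‖ - inner ℝ u (p - x)

/-- Euclidean case of Proposition 2.2: equivariance of data-based quantile sets under
σ-scaled isometries `g(x) = σ • A x + b`. -/
theorem quantile_set_equivariant_scaled_isometry
    {n : ℕ} (hn : 1 ≤ n)
    (μ : Measure (EuclideanSpace ℝ (Fin n))) [IsProbabilityMeasure μ]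
    (hμint : ∃ (u₀ p₀ : EuclideanSpace ℝ (Fin n)), ‖u₀‖ < 1 ∧
      Integrable (fun x => quantileLoss u₀ x p₀) μ)
    (σ : ℝ) (hσ : 0 < σ)
    (A : EuclideanSpace ℝ (Fin n) ≃ₗᵢ[ℝ] EuclideanSpace ℝ (Fin n))
    (b : EuclideanSpace ℝ (Fin n))
    (g : EuclideanSpace ℝ (Fin n) → EuclideanSpace ℝ (Fin n))
    (hg : ∀ x, g x = σ • A x + b)
    (u : EuclideanSpace ℝ (Fin n)) (hu : ‖u‖ < 1) :
    {q | ∀ p, ∫ y, quantileLoss (A u) y q ∂(μ.map g) ≤ ∫ y, quantileLoss (A u) y p ∂(μ.map g)}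
      = g '' {q | ∀ p, ∫ x, quantileLoss u x q ∂μ ≤ ∫ x, quantileLoss u x p ∂μ} := by
  have hσ0 : (σ : ℝ) ≠ 0 := hσ.ne'
  set ginv : EuclideanSpace ℝ (Fin n) → EuclideanSpace ℝ (Fin n) :=
    fun y => A.symm (σ⁻¹ • (y - b)) with hginv_def
  have hginv : ∀ y, g (ginv y) = y := by
    intro y
    rw [hg]
    simp only [hginv_def, LinearIsometryEquiv.apply_symm_apply]
    rw [smul_smul, mul_inv_cancel₀ hσ0, one_smul, sub_add_cancel]
  have hinvg : ∀ x, ginv (g x) = x := by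
    intro x
    rw [hg]
    simp only [hginv_def, add_sub_cancel_right, smul_smul, inv_mul_cancel₀ hσ0, one_smul,
      LinearIsometryEquiv.symm_apply_apply]
  -- scaling of the loss
  have key : ∀ x p, quantileLoss (A u) (g x) (g p) = σ * quantileLoss u x p := by
    intro x p
    have hdiff : g p - g x = σ • A (p - x) := by
      rw [hg, hg, map_sub, smul_sub]
      abel
    unfold quantileLoss
    rw [hdiff, norm_smul, Real.norm_eq_abs, abs_of_pos hσ, A.norm_map,
      real_inner_smul_right, A.inner_map_map, mul_sub]
  have key' : ∀ x p, quantileLoss (A u) (g x) p = σ * quantileLoss u x (ginv p) := by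
    intro x p
    conv_lhs => rw [← hginv p]
    exact key x (ginv p)
  have hgcont : Continuous g := by
    have h1 : Continuous fun x : EuclideanSpace ℝ (Fin n) => σ • A x + b :=
      (A.continuous.const_smul σ).add continuous_const
    exact h1.congr fun x => (hg x).symm
  have hint : ∀ p, ∫ y, quantileLoss (A u) y p ∂(μ.map g)
      = σ * ∫ x, quantileLoss u x (ginv p) ∂μ := by
    intro p
    have h1 : Continuous fun y : EuclideanSpace ℝ (Fin n) => p - y :=
      continuous_const.sub continuous_id
    have hcont : Continuous fun y : EuclideanSpace ℝ (Fin n) => quantileLoss (A u) y p :=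
      h1.norm.sub (continuous_const.inner h1)
    rw [integral_map hgcont.measurable.aemeasurable hcont.aestronglyMeasurable]
    simp_rw [key']
    exact MeasureTheory.integral_const_mul σ _
  ext q
  simp only [Set.mem_setOf_eq, Set.mem_image]
  constructor
  · intro h
    refine ⟨ginv q, fun p => ?_, hginv q⟩
    have := h (g p)
    rw [hint q, hint (g p), hinvg] at this
    exact le_of_mul_le_mul_left this hσ
  · rintro ⟨q₀, hq₀, rfl⟩ p
    rw [hint (g q₀), hint p, hinvg]
    exact mul_le_mul_of_nonneg_left (hq₀ (ginv p)) hσ.le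
end

section
/- Let E = EuclideanSpace ℝ (Fin n) and μ a Borel probability measure on E. Suppose there exist u₀ ∈ E with ‖u₀‖ < 1 and p₀ ∈ E such that x ↦ ρ_{u₀}(x, p₀) is μ-integrable. Then for every u ∈ E (with no restriction on ‖u‖) and every p ∈ E, the function x ↦ ρ_u(x, p) is μ-integrable, and the function G_u : p ↦ ∫ ρ_u(x, p) dμ(x) is continuous on E. (Euclidean case of Proposition 2.4(a).) -/
open MeasureTheory Filter Topology

/-- Euclidean case of Proposition 2.4(a): under the standing integrability assumption,
for every `u` the loss is integrable at every `p`, and the population loss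
`G_u(p) = ∫ ρ_u(x,p) dμ(x)` is continuous on all of `E`. -/
theorem integrable_and_continuous_quantileObjective
    {n : ℕ} (μ : Measure (EuclideanSpace ℝ (Fin n))) [IsProbabilityMeasure μ]
    (hμint : ∃ (u₀ p₀ : EuclideanSpace ℝ (Fin n)), ‖u₀‖ < 1 ∧
      Integrable (fun x => quantileLoss u₀ x p₀) μ) :
    ∀ u : EuclideanSpace ℝ (Fin n),
      (∀ p : EuclideanSpace ℝ (Fin n), Integrable (fun x => quantileLoss u x p) μ) ∧
      Continuous (fun p : EuclideanSpace ℝ (Fin n) => ∫ x, quantileLoss u x p ∂μ) := by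
  obtain ⟨u₀, p₀, hu₀, hint⟩ := hμint
  have hc : (0:ℝ) < 1 - ‖u₀‖ := by linarith
  -- pointwise lower bound: quantileLoss u₀ x p₀ ≥ (1 - ‖u₀‖) * ‖p₀ - x‖
  have hlow : ∀ x, (1 - ‖u₀‖) * ‖p₀ - x‖ ≤ quantileLoss u₀ x p₀ := by
    intro x
    have h1 : inner ℝ u₀ (p₀ - x) ≤ ‖u₀‖ * ‖p₀ - x‖ := real_inner_le_norm _ _
    simp only [quantileLoss]
    nlinarith [norm_nonneg (p₀ - x)]
  have hρnn : ∀ x, 0 ≤ quantileLoss u₀ x p₀ := fun x =>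
    le_trans (by positivity) (hlow x)
  -- integrability of ‖p₀ - x‖
  have hnorm0 : Integrable (fun x => ‖p₀ - x‖) μ := by
    refine Integrable.mono' (hint.const_mul (1 - ‖u₀‖)⁻¹) ?_ ?_
    · exact (continuous_const.sub continuous_id).norm.aestronglyMeasurable
    · filter_upwards with x
      rw [Real.norm_eq_abs, abs_of_nonneg (norm_nonneg _)]
      rw [← div_eq_inv_mul, le_div_iff₀ hc, mul_comm]
      exact hlow x
  -- integrability of ‖p - x‖ for every p
  have hnorm : ∀ p, Integrable (fun x => ‖p - x‖) μ := by
    intro p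
    refine Integrable.mono' ((integrable_const ‖p - p₀‖).add hnorm0) ?_ ?_
    · exact (continuous_const.sub continuous_id).norm.aestronglyMeasurable
    · filter_upwards with x
      rw [Real.norm_eq_abs, abs_of_nonneg (norm_nonneg _)]
      calc ‖p - x‖ = ‖(p - p₀) + (p₀ - x)‖ := by abel_nf
        _ ≤ ‖p - p₀‖ + ‖p₀ - x‖ := norm_add_le _ _
  intro u
  have hIntAll : ∀ p, Integrable (fun x => quantileLoss u x p) μ := by
    intro p
    have hinner : Integrable (fun x => (inner ℝ u (p - x) : ℝ)) μ := by
      refine Integrable.mono' ((hnorm p).const_mul ‖u‖) ?_ ?_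
      · exact (continuous_const.inner (continuous_const.sub continuous_id)).aestronglyMeasurable
      · filter_upwards with x
        calc ‖(inner ℝ u (p - x) : ℝ)‖ ≤ ‖u‖ * ‖p - x‖ := norm_inner_le_norm _ _
          _ = ‖u‖ * ‖p - x‖ := rfl
    exact (hnorm p).sub hinner
  refine ⟨hIntAll, ?_⟩
  -- Lipschitz continuity of the objective
  have hL : LipschitzWith (Real.toNNReal (1 + ‖u‖))
      (fun p : EuclideanSpace ℝ (Fin n) => ∫ x, quantileLoss u x p ∂μ) := by
    refine LipschitzWith.of_dist_le_mul fun p q => ?_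
    rw [Real.dist_eq, ← integral_sub (hIntAll p) (hIntAll q)]
    have hb : ∀ x, |quantileLoss u x p - quantileLoss u x q| ≤ (1 + ‖u‖) * dist p q := by
      intro x
      have h1 : |‖p - x‖ - ‖q - x‖| ≤ ‖p - q‖ := by
        have := abs_norm_sub_norm_le (p - x) (q - x)
        simpa [sub_sub_sub_cancel_right] using this
      have h2 : |(inner ℝ u (p - x) : ℝ) - inner ℝ u (q - x)| ≤ ‖u‖ * ‖p - q‖ := by
        have heq : (inner ℝ u (p - x) : ℝ) - inner ℝ u (q - x) = inner ℝ u (p - q) := by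
          rw [← inner_sub_right]; congr 1; abel
        rw [heq]; exact abs_real_inner_le_norm _ _
      have : quantileLoss u x p - quantileLoss u x q
          = (‖p - x‖ - ‖q - x‖) - ((inner ℝ u (p - x) : ℝ) - inner ℝ u (q - x)) := by
        simp only [quantileLoss]; ring
      rw [this, dist_eq_norm]
      calc |(‖p - x‖ - ‖q - x‖) - ((inner ℝ u (p - x) : ℝ) - inner ℝ u (q - x))|
          ≤ |‖p - x‖ - ‖q - x‖| + |(inner ℝ u (p - x) : ℝ) - inner ℝ u (q - x)| := abs_sub _ _
        _ ≤ ‖p - q‖ + ‖u‖ * ‖p - q‖ := add_le_add h1 h2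
        _ = (1 + ‖u‖) * ‖p - q‖ := by ring
    have h1u : (0:ℝ) ≤ 1 + ‖u‖ := by positivity
    calc |∫ x, (quantileLoss u x p - quantileLoss u x q) ∂μ|
        ≤ ∫ x, |quantileLoss u x p - quantileLoss u x q| ∂μ := by
          simpa [Real.norm_eq_abs] using
            norm_integral_le_integral_norm (μ := μ)
              (fun x => quantileLoss u x p - quantileLoss u x q)
      _ ≤ ∫ _x, (1 + ‖u‖) * dist p q ∂μ := by
          refine integral_mono ((hIntAll p).sub (hIntAll q)).abs (integrable_const _) ?_
          exact hb
      _ = (1 + ‖u‖) * dist p q := by simp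
      _ = (Real.toNNReal (1 + ‖u‖) : ℝ) * dist p q := by
          rw [Real.coe_toNNReal _ h1u]
  exact hL.continuous
end

section
/- Let E = EuclideanSpace ℝ (Fin n) and μ a Borel probability measure on E. Suppose there exist u₀ ∈ E with ‖u₀‖ < 1 and p₀ ∈ E such that x ↦ ρ_{u₀}(x, p₀) is μ-integrable. Then for every u ∈ E with ‖u‖ < 1, the u-quantile set of μ, i.e. the set {q ∈ E : ∀ p ∈ E, G_u(q) ≤ G_u(p)} of minimizers of G_u, is nonempty and compact. (Euclidean case of Proposition 2.4(b).) -/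
open MeasureTheory Filter Topology

section Aux

variable {n : ℕ}

lemma le_quantileLoss (u x p : EuclideanSpace ℝ (Fin n)) :
    (1 - ‖u‖) * ‖p - x‖ ≤ quantileLoss u x p := by
  have h1 : (inner ℝ u (p - x) : ℝ) ≤ ‖u‖ * ‖p - x‖ := real_inner_le_norm _ _
  simp only [quantileLoss]
  nlinarith [norm_nonneg (p - x)]

lemma quantileLoss_le (u x p : EuclideanSpace ℝ (Fin n)) :
    quantileLoss u x p ≤ (1 + ‖u‖) * ‖p - x‖ := by
  have h1 : |(inner ℝ u (p - x) : ℝ)| ≤ ‖u‖ * ‖p - x‖ := abs_real_inner_le_norm _ _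
  have h2 := abs_le.mp h1
  simp only [quantileLoss]
  nlinarith [norm_nonneg (p - x)]

lemma abs_quantileLoss_le (u x p : EuclideanSpace ℝ (Fin n)) :
    |quantileLoss u x p| ≤ (1 + ‖u‖) * ‖p - x‖ := by
  refine abs_le.mpr ⟨?_, quantileLoss_le u x p⟩
  have h := le_quantileLoss u x p
  nlinarith [norm_nonneg (p - x), norm_nonneg u]

lemma abs_quantileLoss_sub_le (u x p q : EuclideanSpace ℝ (Fin n)) :
    |quantileLoss u x p - quantileLoss u x q| ≤ (1 + ‖u‖) * ‖p - q‖ := by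
  have hinner : (inner ℝ u (p - x) : ℝ) - inner ℝ u (q - x) = inner ℝ u (p - q) := by
    rw [← inner_sub_right]
    congr 1
    abel
  have hkey : quantileLoss u x p - quantileLoss u x q
      = (‖p - x‖ - ‖q - x‖) - inner ℝ u (p - q) := by
    simp only [quantileLoss]
    linarith [hinner]
  have h1 : |‖p - x‖ - ‖q - x‖| ≤ ‖p - q‖ := by
    have := abs_norm_sub_norm_le (p - x) (q - x)
    simpa [sub_sub_sub_cancel_right] using this
  have h2 : |(inner ℝ u (p - q) : ℝ)| ≤ ‖u‖ * ‖p - q‖ := abs_real_inner_le_norm _ _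
  rw [hkey]
  calc |(‖p - x‖ - ‖q - x‖) - inner ℝ u (p - q)|
      ≤ |‖p - x‖ - ‖q - x‖| + |(inner ℝ u (p - q) : ℝ)| := abs_sub _ _
    _ ≤ ‖p - q‖ + ‖u‖ * ‖p - q‖ := add_le_add h1 h2
    _ = (1 + ‖u‖) * ‖p - q‖ := by ring

lemma continuous_quantileLoss (u p : EuclideanSpace ℝ (Fin n)) :
    Continuous fun x => quantileLoss u x p := by
  unfold quantileLoss
  exact ((continuous_const.sub continuous_id).norm).sub
    (continuous_const.inner (continuous_const.sub continuous_id))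

end Aux

/-- Euclidean case of Proposition 2.4(b): under the standing integrability assumption,
for every `u` with `‖u‖ < 1` the `u`-quantile set (the set of minimizers of
`G_u(p) = ∫ ρ_u(x,p) dμ(x)`) is nonempty and compact. -/
theorem quantile_set_nonempty_compact
    {n : ℕ} (μ : Measure (EuclideanSpace ℝ (Fin n))) [IsProbabilityMeasure μ]
    (hμint : ∃ (u₀ p₀ : EuclideanSpace ℝ (Fin n)), ‖u₀‖ < 1 ∧
      Integrable (fun x => quantileLoss u₀ x p₀) μ)
    (u : EuclideanSpace ℝ (Fin n)) (hu : ‖u‖ < 1) :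
    ({q : EuclideanSpace ℝ (Fin n) | ∀ p, ∫ x, quantileLoss u x q ∂μ
        ≤ ∫ x, quantileLoss u x p ∂μ}).Nonempty ∧
    IsCompact {q : EuclideanSpace ℝ (Fin n) | ∀ p, ∫ x, quantileLoss u x q ∂μ
        ≤ ∫ x, quantileLoss u x p ∂μ} := by
  classical
  obtain ⟨u₀, p₀, hu₀, hint₀⟩ := hμint
  set β := ‖u‖ with hβ
  have hβ0 : (0:ℝ) ≤ β := norm_nonneg u
  have hβ1 : (0:ℝ) < 1 - β := by linarith
  -- Step 1: integrability of x ↦ ‖p₀ - x‖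
  have hpos₀ : (0:ℝ) < 1 - ‖u₀‖ := by linarith
  have hnorm₀ : Integrable (fun x => ‖p₀ - x‖) μ := by
    refine (hint₀.const_mul ((1 - ‖u₀‖)⁻¹)).mono'
      ((continuous_const.sub continuous_id).norm.aestronglyMeasurable) ?_
    filter_upwards with x
    rw [Real.norm_eq_abs, abs_of_nonneg (norm_nonneg _)]
    have h2 := le_quantileLoss u₀ x p₀
    have hc : (0:ℝ) ≤ (1 - ‖u₀‖)⁻¹ := by positivity
    have := mul_le_mul_of_nonneg_left h2 hc
    rwa [← mul_assoc, inv_mul_cancel₀ hpos₀.ne', one_mul] at this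
  -- integrability of x ↦ ‖p - x‖ for all p
  have hnorm : ∀ p, Integrable (fun x => ‖p - x‖) μ := by
    intro p
    refine ((integrable_const (‖p - p₀‖)).add hnorm₀).mono'
      ((continuous_const.sub continuous_id).norm.aestronglyMeasurable) ?_
    filter_upwards with x
    rw [Real.norm_eq_abs, abs_of_nonneg (norm_nonneg _)]
    exact norm_sub_le_norm_sub_add_norm_sub p p₀ x
  -- integrability of x ↦ ‖x‖
  have hC : Integrable (fun x => ‖x‖) μ := by
    refine ((integrable_const (‖p₀‖)).add hnorm₀).mono'
      (continuous_norm.aestronglyMeasurable) ?_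
    filter_upwards with x
    rw [Real.norm_eq_abs, abs_of_nonneg (norm_nonneg _)]
    calc ‖x‖ = ‖p₀ - (p₀ - x)‖ := by congr 1; abel
      _ ≤ ‖p₀‖ + ‖p₀ - x‖ := norm_sub_le _ _
  -- integrability of the loss for all p
  have hI : ∀ p, Integrable (fun x => quantileLoss u x p) μ := by
    intro p
    refine ((hnorm p).const_mul (1 + β)).mono'
      (continuous_quantileLoss u p).aestronglyMeasurable ?_
    filter_upwards with x
    rw [Real.norm_eq_abs]
    exact abs_quantileLoss_le u x p
  set G := fun p => ∫ x, quantileLoss u x p ∂μ with hGdef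
  -- Step 2: G is Lipschitz hence continuous
  have hGdist : ∀ p q, |G p - G q| ≤ (1 + β) * ‖p - q‖ := by
    intro p q
    rw [hGdef]
    simp only
    rw [← integral_sub (hI p) (hI q)]
    calc |∫ x, (quantileLoss u x p - quantileLoss u x q) ∂μ|
        ≤ ∫ x, |quantileLoss u x p - quantileLoss u x q| ∂μ := by
          simpa [Real.norm_eq_abs] using
            norm_integral_le_integral_norm (fun x => quantileLoss u x p - quantileLoss u x q) (μ := μ)
      _ ≤ ∫ _x, (1 + β) * ‖p - q‖ ∂μ := by
          refine integral_mono ((hI p).sub (hI q)).abs (integrable_const _) ?_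
          intro x
          exact abs_quantileLoss_sub_le u x p q
      _ = (1 + β) * ‖p - q‖ := by simp
  have hGcont : Continuous G := by
    refine (LipschitzWith.of_dist_le_mul (K := Real.toNNReal (1 + β)) ?_).continuous
    intro p q
    rw [Real.dist_eq, Real.coe_toNNReal _ (by positivity)]
    calc |G p - G q| ≤ (1 + β) * ‖p - q‖ := hGdist p q
      _ = (1 + β) * dist p q := by rw [dist_eq_norm]
  -- Step 3: coercivity
  set C := ∫ x, ‖x‖ ∂μ with hCdef
  have hcoer : ∀ p, (1 - β) * (‖p‖ - C) ≤ G p := by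
    intro p
    have hle : ∀ x, (1 - β) * (‖p‖ - ‖x‖) ≤ quantileLoss u x p := by
      intro x
      have h1 : ‖p‖ - ‖x‖ ≤ ‖p - x‖ := norm_sub_norm_le p x
      have := mul_le_mul_of_nonneg_left h1 hβ1.le
      exact this.trans (le_quantileLoss u x p)
    calc (1 - β) * (‖p‖ - C) = ∫ x, (1 - β) * (‖p‖ - ‖x‖) ∂μ := by
          rw [integral_const_mul, integral_sub (integrable_const _) hC]
          simp [hCdef]
      _ ≤ ∫ x, quantileLoss u x p ∂μ := by
          refine integral_mono (((integrable_const _).sub hC).const_mul _) (hI p) ?_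
          intro x; exact hle x
  -- Step 4: existence of a minimizer
  set R : ℝ := max 0 (C + (G 0 + 1) / (1 - β)) with hRdef
  have hR0 : (0:ℝ) ≤ R := le_max_left _ _
  obtain ⟨q, hqmem, hqmin⟩ :=
    (isCompact_closedBall (0 : EuclideanSpace ℝ (Fin n)) R).exists_isMinOn
      ⟨0, Metric.mem_closedBall_self hR0⟩ hGcont.continuousOn
  have hq0 : G q ≤ G 0 := hqmin (Metric.mem_closedBall_self hR0)
  have hqglobal : ∀ p, G q ≤ G p := by
    intro p
    by_cases hp : p ∈ Metric.closedBall (0 : EuclideanSpace ℝ (Fin n)) R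
    · exact hqmin hp
    · have hpn : R < ‖p‖ := by
        simpa [Metric.mem_closedBall, dist_eq_norm] using hp
      have h1 : C + (G 0 + 1) / (1 - β) < ‖p‖ := lt_of_le_of_lt (le_max_right _ _) hpn
      have h2 : (1 - β) * ((G 0 + 1) / (1 - β)) = G 0 + 1 := by
        field_simp
      have h3 : G 0 + 1 < (1 - β) * (‖p‖ - C) := by
        have := mul_lt_mul_of_pos_left (by linarith : (G 0 + 1) / (1 - β) < ‖p‖ - C) hβ1
        linarith [h2]
      have := hcoer p
      linarith
  -- Step 5: the minimizer set
  set M := {q : EuclideanSpace ℝ (Fin n) | ∀ p, G q ≤ G p} with hMdef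
  have hne : M.Nonempty := ⟨q, hqglobal⟩
  have hclosed : IsClosed M := by
    have : M = ⋂ p, {r | G r ≤ G p} := by
      ext r; simp [hMdef, Set.mem_iInter]
    rw [this]
    exact isClosed_iInter fun p => isClosed_le hGcont continuous_const
  have hsub : M ⊆ Metric.closedBall (0 : EuclideanSpace ℝ (Fin n)) R := by
    intro r hr
    have h1 : G r ≤ G 0 := hr 0
    have h2 := hcoer r
    have h3 : ‖r‖ ≤ C + (G 0 + 1) / (1 - β) := by
      rw [← sub_le_iff_le_add']
      rw [le_div_iff₀ hβ1]
      nlinarith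
    rw [Metric.mem_closedBall, dist_zero_right]
    exact h3.trans (le_max_right _ _)
  have hcompact : IsCompact M :=
    (isCompact_closedBall _ _).of_isClosed_subset hclosed hsub
  exact ⟨hne, hcompact⟩
end

section
/- Let E = EuclideanSpace ℝ (Fin n), μ a Borel probability measure on E satisfying the standing integrability assumption, and u ∈ E. Let (X_i)_{i∈ℕ} be independent, identically distributed E-valued random variables with law μ on a probability space (Ω, P), and let L ⊆ E be compact. Then for P-almost every ω, sup_{p ∈ L} | (1/N) ∑_{i=0}^{N−1} ρ_u(X_i(ω), p) − G_u(p) | → 0 as N → ∞. (Euclidean case of Lemma 4.1: uniform strong law of large numbers on compacta.) -/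
open MeasureTheory Filter Topology

lemma ql_lip {n : ℕ} (u x p q : EuclideanSpace ℝ (Fin n)) :
    |quantileLoss u x p - quantileLoss u x q| ≤ (1 + ‖u‖) * ‖p - q‖ := by
  have h1 : quantileLoss u x p - quantileLoss u x q
      = (‖p - x‖ - ‖q - x‖) - inner ℝ u (p - q) := by
    simp only [quantileLoss]
    have h2 : (inner ℝ u (p - x) : ℝ) - inner ℝ u (q - x) = inner ℝ u (p - q) := by
      rw [← inner_sub_right]; congr 1; abel
    linarith [h2]
  rw [h1]
  have h3 : |‖p - x‖ - ‖q - x‖| ≤ ‖p - q‖ := by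
    have h := abs_norm_sub_norm_le (p - x) (q - x)
    have h4 : p - x - (q - x) = p - q := by abel
    rwa [h4] at h
  have h5 : |(inner ℝ u (p - q) : ℝ)| ≤ ‖u‖ * ‖p - q‖ := abs_real_inner_le_norm u (p - q)
  calc |(‖p - x‖ - ‖q - x‖) - inner ℝ u (p - q)|
      ≤ |‖p - x‖ - ‖q - x‖| + |(inner ℝ u (p - q) : ℝ)| := abs_sub _ _
    _ ≤ ‖p - q‖ + ‖u‖ * ‖p - q‖ := add_le_add h3 h5
    _ = (1 + ‖u‖) * ‖p - q‖ := by ring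

lemma ql_cont {n : ℕ} (u p : EuclideanSpace ℝ (Fin n)) :
    Continuous (fun x => quantileLoss u x p) := by
  unfold quantileLoss
  exact (continuous_const.sub continuous_id).norm.sub
    (continuous_const.inner (continuous_const.sub continuous_id))

lemma integrable_ql {n : ℕ} (μ : Measure (EuclideanSpace ℝ (Fin n)))
    [IsProbabilityMeasure μ]
    (hμint : ∃ (u₀ p₀ : EuclideanSpace ℝ (Fin n)), ‖u₀‖ < 1 ∧
      Integrable (fun x => quantileLoss u₀ x p₀) μ)
    (u p : EuclideanSpace ℝ (Fin n)) :
    Integrable (fun x => quantileLoss u x p) μ := by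
  obtain ⟨u₀, p₀, hu₀, hint⟩ := hμint
  have hc : (0:ℝ) < 1 - ‖u₀‖ := by linarith
  have hbase : Integrable (fun x => ‖p₀ - x‖) μ := by
    refine Integrable.mono' (hint.const_mul (1 - ‖u₀‖)⁻¹) ?_ ?_
    · exact ((continuous_const.sub continuous_id).norm).aestronglyMeasurable
    · filter_upwards with x
      rw [Real.norm_eq_abs, abs_of_nonneg (norm_nonneg _)]
      have h2 : (inner ℝ u₀ (p₀ - x) : ℝ) ≤ ‖u₀‖ * ‖p₀ - x‖ := real_inner_le_norm u₀ (p₀ - x)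
      have h3 : (1 - ‖u₀‖) * ‖p₀ - x‖ ≤ quantileLoss u₀ x p₀ := by
        simp only [quantileLoss]; nlinarith [norm_nonneg (p₀ - x)]
      rw [← le_div_iff₀' hc] at h3
      rw [div_eq_inv_mul] at h3
      exact h3
  refine Integrable.mono' ((((integrable_const ‖p - p₀‖).add hbase).const_mul (1 + ‖u‖))) ?_ ?_
  · exact (ql_cont u p).aestronglyMeasurable
  · filter_upwards with x
    rw [Real.norm_eq_abs]
    have h5 : |(inner ℝ u (p - x) : ℝ)| ≤ ‖u‖ * ‖p - x‖ := abs_real_inner_le_norm u (p - x)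
    have h6 : ‖p - x‖ ≤ ‖p - p₀‖ + ‖p₀ - x‖ := by
      have h := norm_sub_le_norm_sub_add_norm_sub p p₀ x
      linarith
    have h7 : |quantileLoss u x p| ≤ (1 + ‖u‖) * ‖p - x‖ := by
      simp only [quantileLoss]
      have h := abs_sub (‖p - x‖ : ℝ) (inner ℝ u (p - x))
      rw [abs_of_nonneg (norm_nonneg _)] at h
      nlinarith
    have h8 : (1 + ‖u‖) * ‖p - x‖ ≤ (1 + ‖u‖) * (‖p - p₀‖ + ‖p₀ - x‖) := by
      have h : (0:ℝ) ≤ 1 + ‖u‖ := by positivity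
      nlinarith
    simp only [Pi.add_apply]
    linarith

lemma emp_lip {n : ℕ} (u : EuclideanSpace ℝ (Fin n)) (xs : ℕ → EuclideanSpace ℝ (Fin n))
    (N : ℕ) (p q : EuclideanSpace ℝ (Fin n)) :
    |(N:ℝ)⁻¹ * ∑ i ∈ Finset.range N, quantileLoss u (xs i) p
      - (N:ℝ)⁻¹ * ∑ i ∈ Finset.range N, quantileLoss u (xs i) q| ≤ (1 + ‖u‖) * ‖p - q‖ := by
  rw [← mul_sub, ← Finset.sum_sub_distrib, abs_mul,
    abs_of_nonneg (inv_nonneg.2 (Nat.cast_nonneg N))]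
  rcases Nat.eq_zero_or_pos N with hN | hN
  · simp [hN]; positivity
  have h1 : |∑ i ∈ Finset.range N, (quantileLoss u (xs i) p - quantileLoss u (xs i) q)|
      ≤ (N : ℝ) * ((1 + ‖u‖) * ‖p - q‖) := by
    calc |∑ i ∈ Finset.range N, (quantileLoss u (xs i) p - quantileLoss u (xs i) q)|
        ≤ ∑ i ∈ Finset.range N, |quantileLoss u (xs i) p - quantileLoss u (xs i) q| :=
          Finset.abs_sum_le_sum_abs _ _
      _ ≤ ∑ _i ∈ Finset.range N, (1 + ‖u‖) * ‖p - q‖ :=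
          Finset.sum_le_sum fun i _ => ql_lip u (xs i) p q
      _ = (N : ℝ) * ((1 + ‖u‖) * ‖p - q‖) := by
          rw [Finset.sum_const, Finset.card_range]; simp [mul_comm]
  have hN' : (0:ℝ) < N := by exact_mod_cast hN
  calc (N:ℝ)⁻¹ * |∑ i ∈ Finset.range N, (quantileLoss u (xs i) p - quantileLoss u (xs i) q)|
      ≤ (N:ℝ)⁻¹ * ((N : ℝ) * ((1 + ‖u‖) * ‖p - q‖)) := by
        exact mul_le_mul_of_nonneg_left h1 (by positivity)
    _ = (1 + ‖u‖) * ‖p - q‖ := by field_simp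

/-- Euclidean case of Lemma 4.1: uniform strong law of large numbers for the empirical
quantile loss over any compact set `L`. -/
theorem uniform_slln_quantileLoss
    {n : ℕ} (μ : Measure (EuclideanSpace ℝ (Fin n))) [IsProbabilityMeasure μ]
    (hμint : ∃ (u₀ p₀ : EuclideanSpace ℝ (Fin n)), ‖u₀‖ < 1 ∧
      Integrable (fun x => quantileLoss u₀ x p₀) μ)
    (u : EuclideanSpace ℝ (Fin n))
    {Ω : Type*} [MeasurableSpace Ω] (P : Measure Ω) [IsProbabilityMeasure P]
    (X : ℕ → Ω → EuclideanSpace ℝ (Fin n))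
    (hXmeas : ∀ i, Measurable (X i))
    (hXindep : ProbabilityTheory.iIndepFun X P)
    (hXlaw : ∀ i, P.map (X i) = μ)
    (L : Set (EuclideanSpace ℝ (Fin n))) (hL : IsCompact L) :
    ∀ᵐ ω ∂P, TendstoUniformlyOn
      (fun (N : ℕ) (p : EuclideanSpace ℝ (Fin n)) =>
        (N : ℝ)⁻¹ * ∑ i ∈ Finset.range N, quantileLoss u (X i ω) p)
      (fun p => ∫ x, quantileLoss u x p ∂μ) atTop L := by
  set K : ℝ := 1 + ‖u‖ with hK
  have hKpos : (0:ℝ) < K := by positivity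
  set G : EuclideanSpace ℝ (Fin n) → ℝ := fun p => ∫ x, quantileLoss u x p ∂μ with hG
  have hint : ∀ p, Integrable (fun x => quantileLoss u x p) μ :=
    fun p => integrable_ql μ hμint u p
  -- G is Lipschitz
  have hGlip : ∀ p q, |G p - G q| ≤ K * ‖p - q‖ := by
    intro p q
    rw [hG, ← integral_sub (hint p) (hint q)]
    calc |∫ x, (quantileLoss u x p - quantileLoss u x q) ∂μ|
        ≤ ∫ x, |quantileLoss u x p - quantileLoss u x q| ∂μ := by
          simpa [Real.norm_eq_abs] using
            norm_integral_le_integral_norm (fun x => quantileLoss u x p - quantileLoss u x q)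
      _ ≤ ∫ _x, K * ‖p - q‖ ∂μ := by
          refine integral_mono ((hint p).sub (hint q)).abs (integrable_const _) ?_
          intro x; exact ql_lip u x p q
      _ = K * ‖p - q‖ := by simp
  -- pointwise SLLN
  have hpoint : ∀ p : EuclideanSpace ℝ (Fin n), ∀ᵐ ω ∂P,
      Tendsto (fun N : ℕ => (N : ℝ)⁻¹ * ∑ i ∈ Finset.range N, quantileLoss u (X i ω) p)
        atTop (𝓝 (G p)) := by
    intro p
    set f : EuclideanSpace ℝ (Fin n) → ℝ := fun x => quantileLoss u x p with hf
    have hfmeas : Measurable f := (ql_cont u p).measurable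
    have hYint : Integrable (fun ω => f (X 0 ω)) P := by
      have h := (hint p)
      rw [← hXlaw 0] at h
      exact (integrable_map_measure ((ql_cont u p).aestronglyMeasurable.mono_measure le_rfl)
        (hXmeas 0).aemeasurable).mp (by rwa [hXlaw 0] at h ⊢) |>.congr (by rfl)
    have hYindep : Pairwise (Function.onFun (ProbabilityTheory.IndepFun · · P) (fun i ω => f (X i ω))) := by
      intro i j hij
      exact (hXindep.indepFun hij).comp hfmeas hfmeas
    have hYident : ∀ i, ProbabilityTheory.IdentDistrib (fun ω => f (X i ω))
        (fun ω => f (X 0 ω)) P P := by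
      intro i
      have hbase : ProbabilityTheory.IdentDistrib (X i) (X 0) P P :=
        ⟨(hXmeas i).aemeasurable, (hXmeas 0).aemeasurable, by rw [hXlaw i, hXlaw 0]⟩
      exact hbase.comp hfmeas
    have := ProbabilityTheory.strong_law_ae (fun i ω => f (X i ω)) hYint hYindep hYident
    have hE : (∫ ω, f (X 0 ω) ∂P) = G p := by
      have h0 : AEStronglyMeasurable f (P.map (X 0)) := by
        rw [hXlaw 0]; exact (ql_cont u p).aestronglyMeasurable
      simp only [hG]
      rw [← hXlaw 0]
      exact (integral_map (hXmeas 0).aemeasurable h0).symm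
    filter_upwards [this] with ω hω
    rw [hE] at hω
    simpa [smul_eq_mul] using hω
  -- countable dense set
  obtain ⟨c, hc_count, hc_dense⟩ :=
    TopologicalSpace.exists_countable_dense (EuclideanSpace ℝ (Fin n))
  have hae : ∀ᵐ ω ∂P, ∀ d ∈ c,
      Tendsto (fun N : ℕ => (N : ℝ)⁻¹ * ∑ i ∈ Finset.range N, quantileLoss u (X i ω) d)
        atTop (𝓝 (G d)) :=
    (ae_ball_iff hc_count).2 fun d _ => hpoint d
  filter_upwards [hae] with ω hω
  rw [Metric.tendstoUniformlyOn_iff]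
  intro ε hε
  set r : ℝ := ε / (3 * K) with hr
  have hrpos : 0 < r := by positivity
  -- finite subcover by balls around points of c
  have hcov : L ⊆ ⋃ d : c, Metric.ball (d : EuclideanSpace ℝ (Fin n)) r := by
    intro p _
    obtain ⟨d, hd, hdist⟩ := hc_dense.exists_dist_lt p hrpos
    exact Set.mem_iUnion.2 ⟨⟨d, hd⟩, by simpa [Metric.mem_ball, dist_comm] using hdist⟩
  obtain ⟨t, ht⟩ := hL.elim_finite_subcover
    (fun d : c => Metric.ball (d : EuclideanSpace ℝ (Fin n)) r)
    (fun _ => Metric.isOpen_ball) hcov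
  have hev : ∀ᶠ N : ℕ in atTop, ∀ d ∈ t,
      dist ((N : ℝ)⁻¹ * ∑ i ∈ Finset.range N, quantileLoss u (X i ω) (d : _)) (G d) < ε / 3 := by
    rw [eventually_all_finset]
    intro d _
    have h := hω d d.2
    have := h.eventually (Metric.ball_mem_nhds (G d) (by positivity : (0:ℝ) < ε / 3))
    filter_upwards [this] with N hN
    simpa [Metric.mem_ball] using hN
  filter_upwards [hev] with N hN
  intro p hp
  obtain ⟨d, hdt, hpd⟩ := Set.mem_iUnion₂.1 (ht hp)
  have hdist : dist p (d : EuclideanSpace ℝ (Fin n)) < r := Metric.mem_ball.1 hpd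
  set F : EuclideanSpace ℝ (Fin n) → ℝ :=
    fun q => (N : ℝ)⁻¹ * ∑ i ∈ Finset.range N, quantileLoss u (X i ω) q with hF
  have h1 : dist (G p) (G d) ≤ K * dist p d := by
    rw [Real.dist_eq, dist_eq_norm]
    exact hGlip p d
  have h2 : dist (F d) (F p) ≤ K * dist p d := by
    rw [Real.dist_eq, dist_comm p d, dist_eq_norm]
    exact emp_lip u (fun i => X i ω) N d p
  have h3 : dist (G d) (F d) < ε / 3 := by
    rw [dist_comm]; exact hN d hdt
  have hKr : K * dist p d < ε / 3 := by
    have : K * dist p d < K * r := by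
      exact mul_lt_mul_of_pos_left hdist hKpos
    rw [hr] at this
    calc K * dist p d < K * (ε / (3 * K)) := this
      _ = ε / 3 := by field_simp
  show dist (G p) (F p) < ε
  calc dist (G p) (F p) ≤ dist (G p) (G d) + dist (G d) (F d) + dist (F d) (F p) :=
        dist_triangle4 _ _ _ _
    _ < ε / 3 + ε / 3 + ε / 3 := by
        have := lt_of_le_of_lt h1 hKr
        have := lt_of_le_of_lt h2 hKr
        linarith
    _ = ε := by ring
end

section
/- Let E = EuclideanSpace ℝ (Fin n), μ a Borel probability measure on E satisfying the standing integrability assumption, and u ∈ E with ‖u‖ < 1. If q ∈ E is a minimizer of G_u, then ‖ ∫_{{x : x ≠ q}} ((q − x)/‖q − x‖ − u) dμ(x) − μ({q}) • u ‖ ≤ μ({q}). In particular, if μ({q}) = 0 then ∫ ((q − x)/‖q − x‖ − u) dμ(x) = 0, where the integrand is assigned the value 0 at x = q (a μ-null point). (Euclidean case of Theorem 3.1: first-order condition for quantiles.) -/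
open MeasureTheory Filter Topology Classical

lemma hasDerivAt_norm_line {n : ℕ} (c v : EuclideanSpace ℝ (Fin n)) (hc : c ≠ 0) :
    HasDerivAt (fun t : ℝ => ‖c + t • v‖) (‖c‖⁻¹ * inner ℝ c v) 0 := by
  have h1 : HasDerivAt (fun t : ℝ => c + t • v) v 0 := by
    simpa using ((hasDerivAt_id (0 : ℝ)).smul_const v).const_add c
  have h2 : HasDerivAt (fun t : ℝ => (inner ℝ (c + t • v) (c + t • v) : ℝ))
      (2 * inner ℝ c v) 0 := by
    have h := h1.inner ℝ h1
    simp only [zero_smul, add_zero] at h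
    rw [show (2 * inner ℝ c v : ℝ) = inner ℝ c v + inner ℝ v c by rw [real_inner_comm c v]; ring]
    exact h
  have hcc : (inner ℝ c c : ℝ) ≠ 0 := fun h => hc (inner_self_eq_zero.mp h)
  have h3 := h2.sqrt (by simpa using hcc)
  simp only [zero_smul, add_zero] at h3
  have heq : (fun t : ℝ => ‖c + t • v‖)
      = fun t : ℝ => Real.sqrt (inner ℝ (c + t • v) (c + t • v)) := by
    funext t; rw [norm_eq_sqrt_real_inner]
  rw [heq]
  convert h3 using 1
  rw [← norm_eq_sqrt_real_inner]
  have hn : ‖c‖ ≠ 0 := norm_ne_zero_iff.mpr hc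
  field_simp

lemma hasDerivAt_quantileLoss {n : ℕ} (u x q v : EuclideanSpace ℝ (Fin n)) (hx : x ≠ q) :
    HasDerivAt (fun t : ℝ => quantileLoss u x (q + t • v))
      (inner ℝ (‖q - x‖⁻¹ • (q - x) - u) v) 0 := by
  have hc : q - x ≠ 0 := sub_ne_zero_of_ne (Ne.symm hx)
  have h1 : HasDerivAt (fun t : ℝ => ‖(q - x) + t • v‖) (‖q - x‖⁻¹ * inner ℝ (q - x) v) 0 :=
    hasDerivAt_norm_line _ _ hc
  have hl : HasDerivAt (fun t : ℝ => (q - x) + t • v) v 0 := by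
    simpa using ((hasDerivAt_id (0 : ℝ)).smul_const v).const_add (q - x)
  have h2 : HasDerivAt (fun t : ℝ => (inner ℝ u ((q - x) + t • v) : ℝ)) (inner ℝ u v) 0 := by
    have h := (hasDerivAt_const (0 : ℝ) u).inner ℝ hl
    simpa using h
  have h := h1.sub h2
  have hpt : ∀ t : ℝ, q + t • v - x = (q - x) + t • v := fun t => by abel
  have hfun : (fun t : ℝ => quantileLoss u x (q + t • v))
      = fun t : ℝ => ‖(q - x) + t • v‖ - inner ℝ u ((q - x) + t • v) := by
    funext t
    rw [quantileLoss, hpt t]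
  rw [hfun]
  have hval : (inner ℝ (‖q - x‖⁻¹ • (q - x) - u) v : ℝ)
      = ‖q - x‖⁻¹ * inner ℝ (q - x) v - inner ℝ u v := by
    rw [inner_sub_left, real_inner_smul_left]
  rw [hval]
  exact h

/-- Euclidean case of Theorem 3.1: the first-order condition at a `u`-quantile `q`:
`‖E[∇ρ_u(X,q); X ≠ q] − μ({q})·u‖ ≤ μ({q})`, and in particular if `μ({q}) = 0` then the
expected gradient vanishes (the integrand being assigned the value `0` at the null
point `x = q`). -/
theorem first_order_condition_quantile
    {n : ℕ} (μ : Measure (EuclideanSpace ℝ (Fin n))) [IsProbabilityMeasure μ]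
    (hμint : ∃ (u₀ p₀ : EuclideanSpace ℝ (Fin n)), ‖u₀‖ < 1 ∧
      Integrable (fun x => quantileLoss u₀ x p₀) μ)
    (u : EuclideanSpace ℝ (Fin n)) (hu : ‖u‖ < 1)
    (q : EuclideanSpace ℝ (Fin n))
    (hq : ∀ p, ∫ x, quantileLoss u x q ∂μ ≤ ∫ x, quantileLoss u x p ∂μ) :
    ‖(∫ x in {x : EuclideanSpace ℝ (Fin n) | x ≠ q},
        (‖q - x‖⁻¹ • (q - x) - u) ∂μ) - (μ {q}).toReal • u‖ ≤ (μ {q}).toReal ∧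
    (μ {q} = 0 →
      (∫ x, (if x = q then 0 else ‖q - x‖⁻¹ • (q - x) - u) ∂μ) = 0) := by
  classical
  obtain ⟨u₀, p₀, hu₀, hint₀⟩ := hμint
  -- integrability of `‖x‖`
  have hcontnorm : ∀ p : EuclideanSpace ℝ (Fin n), Continuous (fun x : EuclideanSpace ℝ (Fin n) => ‖p - x‖) :=
    fun p => (continuous_const.sub continuous_id).norm
  have h1 : Integrable (fun x : EuclideanSpace ℝ (Fin n) => ‖p₀ - x‖) μ := by
    refine (hint₀.const_mul (1 - ‖u₀‖)⁻¹).mono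
      ((hcontnorm p₀).aestronglyMeasurable) (ae_of_all _ fun x => ?_)
    have hin : (inner ℝ u₀ (p₀ - x) : ℝ) ≤ ‖u₀‖ * ‖p₀ - x‖ := real_inner_le_norm _ _
    have hρ : (1 - ‖u₀‖) * ‖p₀ - x‖ ≤ quantileLoss u₀ x p₀ := by
      rw [quantileLoss]; nlinarith [norm_nonneg (p₀ - x)]
    have hpos : (0:ℝ) < 1 - ‖u₀‖ := by linarith
    have h2 : ‖p₀ - x‖ ≤ (1 - ‖u₀‖)⁻¹ * quantileLoss u₀ x p₀ := by
      rw [← div_eq_inv_mul, le_div_iff₀ hpos, mul_comm]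
      exact hρ
    have hρ0 : 0 ≤ quantileLoss u₀ x p₀ :=
      le_trans (by positivity) hρ
    rw [norm_norm, Real.norm_eq_abs,
      abs_of_nonneg (mul_nonneg (le_of_lt (inv_pos.mpr hpos)) hρ0)]
    exact h2
  have hnormint : Integrable (fun x : EuclideanSpace ℝ (Fin n) => ‖x‖) μ := by
    refine (h1.add (integrable_const ‖p₀‖)).mono
      continuous_norm.aestronglyMeasurable (ae_of_all _ fun x => ?_)
    have h2 : ‖x‖ - ‖p₀‖ ≤ ‖x - p₀‖ := norm_sub_norm_le x p₀
    rw [norm_norm]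
    have h3 : ‖x - p₀‖ = ‖p₀ - x‖ := norm_sub_rev _ _
    have h4 : (0:ℝ) ≤ ‖p₀ - x‖ + ‖p₀‖ := by positivity
    simp only [Pi.add_apply, Real.norm_eq_abs]
    rw [abs_of_nonneg h4]
    linarith
  -- integrability of the loss for our `u`
  have hρint : ∀ p : EuclideanSpace ℝ (Fin n), Integrable (fun x => quantileLoss u x p) μ := by
    intro p
    have hcont : Continuous (fun x : EuclideanSpace ℝ (Fin n) => quantileLoss u x p) := by
      unfold quantileLoss
      exact (hcontnorm p).sub
        (Continuous.inner continuous_const (continuous_const.sub continuous_id))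
    refine (((integrable_const ‖p‖).add hnormint).const_mul (1 + ‖u‖)).mono
      hcont.aestronglyMeasurable (ae_of_all _ fun x => ?_)
    have hin : |(inner ℝ u (p - x) : ℝ)| ≤ ‖u‖ * ‖p - x‖ := abs_real_inner_le_norm _ _
    have hpx : ‖p - x‖ ≤ ‖p‖ + ‖x‖ := norm_sub_le _ _
    have hb : |quantileLoss u x p| ≤ (1 + ‖u‖) * (‖p‖ + ‖x‖) := by
      rw [quantileLoss]
      have := abs_sub (‖p - x‖) (inner ℝ u (p - x) : ℝ)
      have h5 : |‖p - x‖| = ‖p - x‖ := abs_of_nonneg (norm_nonneg _)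
      have h6 : |‖p - x‖ - (inner ℝ u (p - x) : ℝ)| ≤ |‖p - x‖| + |(inner ℝ u (p - x) : ℝ)| :=
        abs_sub _ _
      nlinarith [norm_nonneg u, norm_nonneg x, norm_nonneg p, norm_nonneg (p - x)]
    have h7 : (0:ℝ) ≤ (1 + ‖u‖) * (‖p‖ + ‖x‖) := by positivity
    simp only [Pi.add_apply, Real.norm_eq_abs]
    rw [abs_of_nonneg h7]
    exact hb
  -- the gradient integrand
  set g : EuclideanSpace ℝ (Fin n) → EuclideanSpace ℝ (Fin n) := fun x => ‖q - x‖⁻¹ • (q - x) - u with hgdef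
  have hgmeas : Measurable g := by
    apply Measurable.sub _ measurable_const
    exact ((measurable_const.sub measurable_id).norm.inv).smul
      (measurable_const.sub measurable_id)
  have hgbound : ∀ x, ‖g x‖ ≤ 1 + ‖u‖ := by
    intro x
    refine (norm_sub_le _ _).trans ?_
    have h2 : ‖‖q - x‖⁻¹ • (q - x)‖ ≤ 1 := by
      rcases eq_or_ne (q - x) 0 with h | h
      · simp [h]
      · rw [norm_smul, norm_inv, norm_norm, inv_mul_cancel₀ (norm_ne_zero_iff.mpr h)]
    linarith
  have hgint : Integrable g μ := by
    refine Integrable.mono' (integrable_const (1 + ‖u‖))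
      hgmeas.aestronglyMeasurable (ae_of_all _ hgbound)
  set c := (μ {q}).toReal with hcdef
  have hcnn : 0 ≤ c := ENNReal.toReal_nonneg
  have hsq : MeasurableSet {x : EuclideanSpace ℝ (Fin n) | x = q} := measurableSet_eq
  -- the key first-order inequality in every direction v
  have key : ∀ v : EuclideanSpace ℝ (Fin n),
      0 ≤ c * ‖v‖ + inner ℝ ((∫ x in {x : EuclideanSpace ℝ (Fin n) | x ≠ q}, g x ∂μ) - c • u) v := by
    intro v
    set D : EuclideanSpace ℝ (Fin n) → ℝ := fun x => if x = q then ‖v‖ - inner ℝ u v else inner ℝ (g x) v with hDdef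
    have hDmeas : Measurable D := by
      refine Measurable.ite hsq measurable_const ?_
      exact (Continuous.inner continuous_id continuous_const).measurable.comp hgmeas
    have hDbound : ∀ x, ‖D x‖ ≤ (1 + ‖u‖) * ‖v‖ := by
      intro x
      rw [Real.norm_eq_abs]
      by_cases hx : x = q
      · simp only [hDdef, hx, if_pos rfl]
        have h2 : |(inner ℝ u v : ℝ)| ≤ ‖u‖ * ‖v‖ := abs_real_inner_le_norm _ _
        have h3 : |‖v‖ - (inner ℝ u v : ℝ)| ≤ |‖v‖| + |(inner ℝ u v : ℝ)| := abs_sub _ _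
        have h4 : |‖v‖| = ‖v‖ := abs_of_nonneg (norm_nonneg _)
        nlinarith [norm_nonneg v, norm_nonneg u]
      · simp only [hDdef, if_neg hx]
        refine (abs_real_inner_le_norm _ _).trans ?_
        have := hgbound x
        nlinarith [norm_nonneg v]
    have hDint : Integrable D μ :=
      Integrable.mono' (integrable_const ((1 + ‖u‖) * ‖v‖))
        hDmeas.aestronglyMeasurable (ae_of_all _ hDbound)
    -- difference quotients
    set F : ℝ → EuclideanSpace ℝ (Fin n) → ℝ :=
      fun t x => t⁻¹ * (quantileLoss u x (q + t • v) - quantileLoss u x q) with hFdef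
    have hFmeas : ∀ t : ℝ, AEStronglyMeasurable (F t) μ := by
      intro t
      have hcont : Continuous (F t) := by
        apply Continuous.mul continuous_const
        apply Continuous.sub
        · unfold quantileLoss
          exact (hcontnorm _).sub
            (Continuous.inner continuous_const (continuous_const.sub continuous_id))
        · unfold quantileLoss
          exact (hcontnorm _).sub
            (Continuous.inner continuous_const (continuous_const.sub continuous_id))
      exact hcont.aestronglyMeasurable
    have hFbound : ∀ t : ℝ, t ∈ Set.Ioi (0:ℝ) → ∀ x, ‖F t x‖ ≤ (1 + ‖u‖) * ‖v‖ := by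
      intro t ht x
      have htpos : (0:ℝ) < t := ht
      have hdiff : |quantileLoss u x (q + t • v) - quantileLoss u x q|
          ≤ (1 + ‖u‖) * ‖t • v‖ := by
        have h8 : quantileLoss u x (q + t • v) - quantileLoss u x q
            = (‖q + t • v - x‖ - ‖q - x‖) - inner ℝ u (t • v) := by
          simp only [quantileLoss]
          have h9 : q + t • v - x - (q - x) = t • v := by abel
          have h10' : (inner ℝ u (t • v) : ℝ)
              = inner ℝ u (q + t • v - x) - inner ℝ u (q - x) := by
            rw [← inner_sub_right, h9]
          rw [h10']
          ring
        rw [h8]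
        have h10 : |‖q + t • v - x‖ - ‖q - x‖| ≤ ‖t • v‖ := by
          have := abs_norm_sub_norm_le (q + t • v - x) (q - x)
          have h11 : q + t • v - x - (q - x) = t • v := by abel
          rwa [h11] at this
        have h12 : |(inner ℝ u (t • v) : ℝ)| ≤ ‖u‖ * ‖t • v‖ := abs_real_inner_le_norm _ _
        have h13 := abs_sub (‖q + t • v - x‖ - ‖q - x‖) (inner ℝ u (t • v) : ℝ)
        nlinarith [norm_nonneg (t • v), norm_nonneg u]
      rw [hFdef]
      simp only [Real.norm_eq_abs, abs_mul, abs_inv]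
      rw [abs_of_pos htpos]
      have h14 : ‖t • v‖ = t * ‖v‖ := by
        rw [norm_smul, Real.norm_eq_abs, abs_of_pos htpos]
      rw [h14] at hdiff
      rw [inv_mul_le_iff₀ htpos]
      calc |quantileLoss u x (q + t • v) - quantileLoss u x q|
          ≤ (1 + ‖u‖) * (t * ‖v‖) := hdiff
        _ = t * ((1 + ‖u‖) * ‖v‖) := by ring
    have hFlim : ∀ x, Tendsto (fun t => F t x) (𝓝[>] (0:ℝ)) (𝓝 (D x)) := by
      intro x
      by_cases hx : x = q
      · subst hx
        have heval : ∀ t : ℝ, t ∈ Set.Ioi (0:ℝ) → F t x = ‖v‖ - inner ℝ u v := by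
          intro t ht
          have htpos : (0:ℝ) < t := ht
          have h20 : quantileLoss u x (x + t • v) = t * ‖v‖ - t * inner ℝ u v := by
            simp only [quantileLoss]
            have h21 : x + t • v - x = t • v := by abel
            rw [h21, norm_smul, real_inner_smul_right, Real.norm_eq_abs,
              abs_of_pos htpos]
          have h22 : quantileLoss u x x = 0 := by
            simp [quantileLoss]
          rw [hFdef]
          simp only [h20, h22, sub_zero]
          field_simp
        have hD : D x = ‖v‖ - inner ℝ u v := if_pos rfl
        rw [hD]
        refine Tendsto.congr' ?_ tendsto_const_nhds
        filter_upwards [self_mem_nhdsWithin] with t ht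
        exact (heval t ht).symm
      · have hder := hasDerivAt_quantileLoss u x q v hx
        have hslope := hasDerivAt_iff_tendsto_slope.mp hder
        have hmono : 𝓝[>] (0:ℝ) ≤ 𝓝[≠] (0:ℝ) :=
          nhdsWithin_mono _ (fun t ht => ne_of_gt ht)
        have h30 := hslope.mono_left hmono
        have hD : D x = inner ℝ (g x) v := if_neg hx
        rw [hD]
        refine Tendsto.congr' ?_ h30
        filter_upwards [self_mem_nhdsWithin] with t ht
        have htpos : (0:ℝ) < t := ht
        rw [slope_def_field]
        have h31 : q + (0:ℝ) • v = q := by simp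
        rw [hFdef]
        simp only [sub_zero, h31]
        rw [div_eq_inv_mul]
    have htend : Tendsto (fun t : ℝ => ∫ x, F t x ∂μ) (𝓝[>] (0:ℝ))
        (𝓝 (∫ x, D x ∂μ)) := by
      refine tendsto_integral_filter_of_dominated_convergence
        (fun _ => (1 + ‖u‖) * ‖v‖) ?_ ?_ (integrable_const _) ?_
      · filter_upwards with t; exact hFmeas t
      · filter_upwards [self_mem_nhdsWithin] with t ht
        exact ae_of_all _ (hFbound t ht)
      · exact ae_of_all _ hFlim
    have hnn : ∀ᶠ t in 𝓝[>] (0:ℝ), 0 ≤ ∫ x, F t x ∂μ := by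
      filter_upwards [self_mem_nhdsWithin] with t ht
      have htpos : (0:ℝ) < t := ht
      have h40 : ∫ x, F t x ∂μ
          = t⁻¹ * ((∫ x, quantileLoss u x (q + t • v) ∂μ) - ∫ x, quantileLoss u x q ∂μ) := by
        rw [hFdef]
        rw [integral_const_mul]
        rw [integral_sub (hρint _) (hρint _)]
      rw [h40]
      have h41 := hq (q + t • v)
      have ht' : (0:ℝ) ≤ t⁻¹ := by positivity
      exact mul_nonneg ht' (by linarith)
    have hD0 : 0 ≤ ∫ x, D x ∂μ := ge_of_tendsto htend hnn
    -- compute the integral of D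
    have hcompl : {x : EuclideanSpace ℝ (Fin n) | x = q}ᶜ = {x : EuclideanSpace ℝ (Fin n) | x ≠ q} := rfl
    have hsplit : (∫ x in {x : EuclideanSpace ℝ (Fin n) | x = q}, D x ∂μ) + (∫ x in {x : EuclideanSpace ℝ (Fin n) | x ≠ q}, D x ∂μ)
        = ∫ x, D x ∂μ := by
      rw [← hcompl]
      exact integral_add_compl hsq hDint
    have hs1 : ∫ x in {x : EuclideanSpace ℝ (Fin n) | x = q}, D x ∂μ = c * (‖v‖ - inner ℝ u v) := by
      rw [setIntegral_congr_fun hsq (g := fun _ => ‖v‖ - inner ℝ u v)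
        (fun x hx => by
          have hx' : x = q := hx
          simp only [hDdef]
          rw [if_pos hx'])]
      rw [setIntegral_const]
      rw [Set.setOf_eq_eq_singleton, smul_eq_mul, hcdef]
      rfl
    have hs2 : ∫ x in {x : EuclideanSpace ℝ (Fin n) | x ≠ q}, D x ∂μ
        = inner ℝ (∫ x in {x : EuclideanSpace ℝ (Fin n) | x ≠ q}, g x ∂μ) v := by
      have hcompl' : {x : EuclideanSpace ℝ (Fin n) | x ≠ q} = {x | x = q}ᶜ := rfl
      rw [hcompl']
      rw [setIntegral_congr_fun (hsq.compl) (g := fun x => (inner ℝ (g x) v : ℝ))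
        (fun x hx => by
          have hx' : ¬ x = q := hx
          simp only [hDdef]
          rw [if_neg hx'])]
      have h50 : ∀ x : EuclideanSpace ℝ (Fin n), (inner ℝ (g x) v : ℝ) = inner ℝ v (g x) :=
        fun x => real_inner_comm _ _
      simp_rw [h50]
      rw [integral_inner (hgint.restrict) v]
      exact real_inner_comm _ _
    have hD1 : ∫ x, D x ∂μ
        = c * ‖v‖ + inner ℝ ((∫ x in {x : EuclideanSpace ℝ (Fin n) | x ≠ q}, g x ∂μ) - c • u) v := by
      rw [← hsplit, hs1, hs2, inner_sub_left, real_inner_smul_left]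
      ring
    rw [hD1] at hD0
    exact hD0
  -- derive the norm bound
  set w : EuclideanSpace ℝ (Fin n) := (∫ x in {x : EuclideanSpace ℝ (Fin n) | x ≠ q}, g x ∂μ) - c • u with hwdef
  have main1 : ‖w‖ ≤ c := by
    have hk := key (-w)
    rw [inner_neg_right, real_inner_self_eq_norm_mul_norm, norm_neg] at hk
    rcases eq_or_lt_of_le (norm_nonneg w) with h | h
    · rw [← h]; exact hcnn
    · nlinarith
  refine ⟨main1, ?_⟩
  intro h0
  have hc0 : c = 0 := by rw [hcdef, h0]; simp
  have hw0 : w = 0 := by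
    rw [← norm_le_zero_iff]
    rw [← hc0]
    exact main1
  have hint0 : (∫ x in {x : EuclideanSpace ℝ (Fin n) | x ≠ q}, g x ∂μ) = 0 := by
    have := hw0
    rw [hwdef, hc0, zero_smul, sub_zero] at this
    exact this
  have hae : ∀ᵐ x ∂μ, x ≠ q := by
    rw [ae_iff]
    convert h0 using 2
    simp
  have hcongr : (fun x : EuclideanSpace ℝ (Fin n) => if x = q then (0 : EuclideanSpace ℝ (Fin n)) else g x) =ᵐ[μ] g := by
    filter_upwards [hae] with x hx
    simp [hx]
  rw [integral_congr_ae hcongr]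
  have hrestrict : μ.restrict {x : EuclideanSpace ℝ (Fin n) | x ≠ q} = μ :=
    Measure.restrict_eq_self_of_ae_mem hae
  rw [← hrestrict]
  exact hint0
end

section
/- Let E = EuclideanSpace ℝ (Fin n), μ a Borel probability measure on E satisfying the standing integrability assumption, u ∈ E, and q ∈ E a point with μ({q}) = 0. Then G_u is differentiable at q with gradient ∫ ((q − x)/‖q − x‖ − u) dμ(x) (the integrand assigned the value −u at the μ-null point x = q); that is, HasGradientAt G_u (∫ Ψ dμ) q where Ψ(x) = (q − x)/‖q − x‖ − u. (Euclidean, pointwise case of Lemma A.3(a): differentiability of the population loss at non-atoms.) -/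
open MeasureTheory Filter Topology

lemma hasFDerivAt_norm_inner {E : Type*} [NormedAddCommGroup E] [InnerProductSpace ℝ E]
    {y : E} (hy : y ≠ 0) :
    HasFDerivAt (fun z : E => ‖z‖) (‖y‖⁻¹ • innerSL ℝ y) y := by
  have hny : ‖y‖ ≠ 0 := norm_ne_zero_iff.mpr hy
  have h1 : HasFDerivAt (fun z : E => ‖z‖ ^ 2) (2 • innerSL ℝ y) y := by
    simpa using (hasFDerivAt_id y).norm_sq
  have hsq : (‖y‖ : ℝ) ^ 2 ≠ 0 := pow_ne_zero 2 hny
  have h2 := (Real.hasDerivAt_sqrt hsq).comp_hasFDerivAt y h1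
  have hfun : (fun z : E => Real.sqrt (‖z‖ ^ 2)) = fun z : E => ‖z‖ := by
    funext z; rw [Real.sqrt_sq (norm_nonneg z)]
  rw [show ((fun x => Real.sqrt x) ∘ fun z : E => ‖z‖ ^ 2) = fun z : E => ‖z‖ from hfun, Real.sqrt_sq (norm_nonneg y)] at h2
  have heq : (1 / (2 * ‖y‖)) • (2 • innerSL ℝ y) = ‖y‖⁻¹ • innerSL ℝ y := by
    ext w
    simp only [ContinuousLinearMap.smul_apply, two_smul, ContinuousLinearMap.add_apply,
      smul_eq_mul]
    field_simp
    ring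
  rw [heq] at h2
  exact h2


/-- Euclidean, pointwise case of Lemma A.3(a): at any point `q` which is not an atom of
`μ`, the population loss `G_u` is differentiable with gradient
`∫ ((q − x)/‖q − x‖ − u) dμ(x)` (the integrand being `−u` at the null point `x = q`). -/
theorem hasGradientAt_quantileObjective
    {n : ℕ} (μ : Measure (EuclideanSpace ℝ (Fin n))) [IsProbabilityMeasure μ]
    (hμint : ∃ (u₀ p₀ : EuclideanSpace ℝ (Fin n)), ‖u₀‖ < 1 ∧
      Integrable (fun x => quantileLoss u₀ x p₀) μ)
    (u : EuclideanSpace ℝ (Fin n))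
    (q : EuclideanSpace ℝ (Fin n)) (hq : μ {q} = 0) :
    HasGradientAt (fun p => ∫ x, quantileLoss u x p ∂μ)
      (∫ x, (‖q - x‖⁻¹ • (q - x) - u) ∂μ) q := by
  have hE : True := trivial
  obtain ⟨u₀, p₀, hu₀, hint⟩ := hμint
  have hpos : (0:ℝ) < 1 - ‖u₀‖ := by linarith
  -- integrability of ‖p₀ - x‖
  have h1 : Integrable (fun x : EuclideanSpace ℝ (Fin n) => ‖p₀ - x‖) μ := by
    refine Integrable.mono' (hint.const_mul (1 - ‖u₀‖)⁻¹)
      ((continuous_const.sub continuous_id).norm.aestronglyMeasurable) ?_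
    filter_upwards with x
    have hib := real_inner_le_norm u₀ (p₀ - x)
    rw [Real.norm_eq_abs, abs_of_nonneg (norm_nonneg _)]
    rw [le_inv_mul_iff₀ hpos]
    unfold quantileLoss
    nlinarith [norm_nonneg (p₀ - x)]
  -- integrability of ‖q - x‖
  have h2 : Integrable (fun x : EuclideanSpace ℝ (Fin n) => ‖q - x‖) μ := by
    refine Integrable.mono' ((integrable_const ‖q - p₀‖).add h1)
      ((continuous_const.sub continuous_id).norm.aestronglyMeasurable) ?_
    filter_upwards with x
    rw [Real.norm_eq_abs, abs_of_nonneg (norm_nonneg _)]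
    exact norm_sub_le_norm_sub_add_norm_sub q p₀ x
  -- integrability of the loss at q
  have hFq : Integrable (fun x : EuclideanSpace ℝ (Fin n) => quantileLoss u x q) μ := by
    refine Integrable.mono' (h2.const_mul (1 + ‖u‖))
      ?_ ?_
    · apply Continuous.aestronglyMeasurable
      exact (continuous_const.sub continuous_id).norm.sub
        (Continuous.inner continuous_const (continuous_const.sub continuous_id))
    · filter_upwards with x
      have hib := abs_real_inner_le_norm u (q - x)
      unfold quantileLoss
      rw [Real.norm_eq_abs]
      have := abs_sub (‖q - x‖) (inner ℝ u (q - x) : ℝ)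
      calc |‖q - x‖ - (inner ℝ u (q - x) : ℝ)| ≤ |‖q - x‖| + |(inner ℝ u (q - x) : ℝ)| :=
            abs_sub _ _
        _ ≤ ‖q - x‖ + ‖u‖ * ‖q - x‖ := by
            rw [abs_of_nonneg (norm_nonneg _)]; linarith
        _ = (1 + ‖u‖) * ‖q - x‖ := by ring
  -- the integrand of the gradient
  set g : EuclideanSpace ℝ (Fin n) → EuclideanSpace ℝ (Fin n) := fun x => ‖q - x‖⁻¹ • (q - x) - u with hg_def
  have hg_meas : AEStronglyMeasurable g μ := by
    apply Measurable.aestronglyMeasurable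
    exact (((measurable_const.sub measurable_id).norm.inv).smul
      (measurable_const.sub measurable_id)).sub measurable_const
  have hg_bd : ∀ x : EuclideanSpace ℝ (Fin n), ‖g x‖ ≤ 1 + ‖u‖ := by
    intro x
    refine (norm_sub_le _ _).trans ?_
    have : ‖‖q - x‖⁻¹ • (q - x)‖ ≤ 1 := by
      rw [norm_smul, Real.norm_eq_abs, abs_of_nonneg (inv_nonneg.mpr (norm_nonneg _))]
      rcases eq_or_ne (q - x) 0 with h | h
      · simp [h]
      · rw [inv_mul_cancel₀ (norm_ne_zero_iff.mpr h)]
    linarith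
  have hg_int : Integrable g μ :=
    Integrable.mono' (integrable_const (1 + ‖u‖)) hg_meas
      (Filter.Eventually.of_forall hg_bd)
  -- the a.e. pointwise derivative
  set F' : EuclideanSpace ℝ (Fin n) → EuclideanSpace ℝ (Fin n) →L[ℝ] ℝ := fun x => innerSL ℝ (g x) with hF'_def
  have hF'_meas : AEStronglyMeasurable F' μ :=
    (innerSL ℝ (E := EuclideanSpace ℝ (Fin n))).continuous.comp_aestronglyMeasurable hg_meas
  have h_diff : ∀ᵐ x ∂μ, HasFDerivAt (fun p => quantileLoss u x p) (F' x) q := by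
    have hae : ∀ᵐ x ∂μ, x ≠ q := by
      rw [ae_iff]
      simpa using hq
    filter_upwards [hae] with x hx
    have hqx : q - x ≠ 0 := sub_ne_zero.mpr (Ne.symm hx)
    have hnorm : HasFDerivAt (fun p : EuclideanSpace ℝ (Fin n) => ‖p - x‖) (‖q - x‖⁻¹ • innerSL ℝ (q - x)) q := by
      have hcomp := (hasFDerivAt_norm_inner hqx).comp q (hasFDerivAt_sub_const (x := q) x)
      rw [ContinuousLinearMap.comp_id] at hcomp
      exact hcomp
    have hlin : HasFDerivAt (fun p : EuclideanSpace ℝ (Fin n) => (inner ℝ u (p - x) : ℝ)) (innerSL ℝ u) q := by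
      have : (fun p : EuclideanSpace ℝ (Fin n) => (inner ℝ u (p - x) : ℝ))
          = fun p : EuclideanSpace ℝ (Fin n) => innerSL ℝ u p - (inner ℝ u x : ℝ) := by
        funext p
        simp [inner_sub_right]
      rw [this]
      exact (innerSL ℝ u).hasFDerivAt.sub_const _
    have := hnorm.sub hlin
    refine this.congr_fderiv ?_
    ext w
    simp only [hF'_def, hg_def, innerSL_apply_apply, ContinuousLinearMap.sub_apply,
      ContinuousLinearMap.smul_apply, smul_eq_mul]
    simp only [inner_sub_left, real_inner_smul_left]
  -- the lipschitz bound
  have h_lip : ∀ᵐ x ∂μ, ∀ p ∈ Metric.ball q 1,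
      ‖quantileLoss u x p - quantileLoss u x q‖ ≤ (1 + ‖u‖) * ‖p - q‖ := by
    filter_upwards with x p _
    have key : quantileLoss u x p - quantileLoss u x q
        = (‖p - x‖ - ‖q - x‖) - (inner ℝ u (p - q) : ℝ) := by
      unfold quantileLoss
      have : (inner ℝ u (p - x) : ℝ) - inner ℝ u (q - x) = inner ℝ u (p - q) := by
        rw [← inner_sub_right]
        congr 1
        abel
      linarith [this]
    rw [key, Real.norm_eq_abs]
    have h1' : |‖p - x‖ - ‖q - x‖| ≤ ‖p - q‖ := by
      have := abs_norm_sub_norm_le (p - x) (q - x)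
      simpa [sub_sub_sub_cancel_right] using this
    have h2' := abs_real_inner_le_norm u (p - q)
    calc |(‖p - x‖ - ‖q - x‖) - (inner ℝ u (p - q) : ℝ)|
        ≤ |‖p - x‖ - ‖q - x‖| + |(inner ℝ u (p - q) : ℝ)| := abs_sub _ _
      _ ≤ ‖p - q‖ + ‖u‖ * ‖p - q‖ := add_le_add h1' h2'
      _ = (1 + ‖u‖) * ‖p - q‖ := by ring
  -- measurability in a neighborhood
  have hF_meas : ∀ p ∈ Metric.ball q (1:ℝ),
      AEStronglyMeasurable (fun x : EuclideanSpace ℝ (Fin n) => quantileLoss u x p) μ := by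
    intro p _
    apply Continuous.aestronglyMeasurable
    exact (continuous_const.sub continuous_id).norm.sub
      (Continuous.inner continuous_const (continuous_const.sub continuous_id))
  -- apply the dominated differentiation theorem
  have main := hasFDerivAt_integral_of_dominated_loc_of_lip'
    (F := fun p x => quantileLoss u x p) (F' := F') (bound := fun _ => 1 + ‖u‖)
    (μ := μ) (x₀ := q) (Metric.ball_mem_nhds q one_pos) hF_meas hFq hF'_meas h_lip (integrable_const _) h_diff
  obtain ⟨-, hmain⟩ := main
  -- exchange integral with innerSL
  have hexch : ∫ x, F' x ∂μ = innerSL ℝ (∫ x, g x ∂μ) :=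
    ContinuousLinearMap.integral_comp_comm (innerSL ℝ) hg_int
  rw [hexch] at hmain
  rw [hasGradientAt_iff_hasFDerivAt]
  have htd : (InnerProductSpace.toDual ℝ (EuclideanSpace ℝ (Fin n)))
      (∫ x, (‖q - x‖⁻¹ • (q - x) - u) ∂μ)
      = innerSL ℝ (∫ x, g x ∂μ) := by
    ext w
    simp [InnerProductSpace.toDual_apply_apply, hg_def]
  rw [htd]
  exact hmain
end

section
/- Let E = EuclideanSpace ℝ (Fin n), ξ ∈ E with ‖ξ‖ = 1, and μ a Borel probability measure on E satisfying the standing integrability assumption whose topological support is not contained in any affine line {p + tξ : t ∈ ℝ} (p ∈ E). Let (β_m) be a sequence in [0, 1) converging to 1 and, for each m, let q_m ∈ E be a minimizer of G_{β_m ξ}. Then ∫ ‖ (q_m − x)/‖q_m − x‖ − ξ ‖² dμ(x) → 0 as m → ∞, where (q_m − x)/‖q_m − x‖ is interpreted as 0 when x = q_m. (Euclidean case of Theorem 6.1(c): extreme quantiles lie asymptotically in direction ξ from the data, in mean square.) -/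
open MeasureTheory Filter Topology

/-- The topological support of a measure: points all of whose neighbourhoods have
positive measure. -/
def measSupport {α : Type*} [TopologicalSpace α] [MeasurableSpace α]
    (μ : Measure α) : Set α :=
  {x | ∀ U ∈ nhds x, μ U ≠ 0}

section Aux

variable {n : ℕ} (μ : Measure (EuclideanSpace ℝ (Fin n))) [IsProbabilityMeasure μ]

lemma aux_integrable_norm
    (hμint : ∃ (u₀ p₀ : EuclideanSpace ℝ (Fin n)), ‖u₀‖ < 1 ∧
      Integrable (fun x => quantileLoss u₀ x p₀) μ) :
    Integrable (fun x => ‖x‖) μ := by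
  obtain ⟨u, p, hu, hI⟩ := hμint
  have h1 : Integrable (fun x => ‖p - x‖) μ := by
    refine Integrable.mono' (hI.const_mul ((1 - ‖u‖)⁻¹)) ?_ ?_
    · exact ((continuous_const.sub continuous_id).norm).aestronglyMeasurable
    · refine Filter.Eventually.of_forall fun x => ?_
      rw [norm_norm]
      have hpos : (0:ℝ) < 1 - ‖u‖ := by linarith
      have hCS : (inner ℝ u (p - x) : ℝ) ≤ ‖u‖ * ‖p - x‖ := real_inner_le_norm u (p - x)
      have hqnn : (1 - ‖u‖) * ‖p - x‖ ≤ quantileLoss u x p := by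
        unfold quantileLoss; nlinarith [norm_nonneg (p - x)]
      calc ‖p - x‖ = (1 - ‖u‖)⁻¹ * ((1 - ‖u‖) * ‖p - x‖) := by
            field_simp
        _ ≤ (1 - ‖u‖)⁻¹ * quantileLoss u x p := by
            exact mul_le_mul_of_nonneg_left hqnn (by positivity)
  refine Integrable.mono' (h1.add (integrable_const ‖p‖)) ?_ ?_
  · exact continuous_norm.aestronglyMeasurable
  · refine Filter.Eventually.of_forall fun x => ?_
    rw [norm_norm]
    calc ‖x‖ = ‖p - (p - x)‖ := by congr 1; abel
      _ ≤ ‖p - x‖ + ‖p‖ := by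
          calc ‖p - (p - x)‖ ≤ ‖p‖ + ‖p - x‖ := norm_sub_le _ _
            _ = ‖p - x‖ + ‖p‖ := by ring

lemma aux_integrable_id (hnorm : Integrable (fun x => ‖x‖) μ) :
    Integrable (fun x : EuclideanSpace ℝ (Fin n) => x) μ :=
  (integrable_norm_iff continuous_id.aestronglyMeasurable).mp hnorm

lemma aux_integrable_sub (hnorm : Integrable (fun x => ‖x‖) μ)
    (p : EuclideanSpace ℝ (Fin n)) :
    Integrable (fun x => p - x) μ :=
  (integrable_const p).sub (aux_integrable_id μ hnorm)

lemma aux_integrable_quantileLoss (hnorm : Integrable (fun x => ‖x‖) μ)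
    (u p : EuclideanSpace ℝ (Fin n)) :
    Integrable (fun x => quantileLoss u x p) μ := by
  unfold quantileLoss
  exact ((aux_integrable_sub μ hnorm p).norm).sub
    ((aux_integrable_sub μ hnorm p).const_inner u)

lemma norm_dir_le {m : ℕ} (v : EuclideanSpace ℝ (Fin m)) : ‖‖v‖⁻¹ • v‖ ≤ 1 := by
  rcases eq_or_ne v 0 with h | h
  · simp [h]
  · rw [norm_smul, norm_inv, norm_norm, inv_mul_cancel₀ (norm_ne_zero_iff.mpr h)]

lemma aux_meas_dir (q : EuclideanSpace ℝ (Fin n)) :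
    Measurable (fun x : EuclideanSpace ℝ (Fin n) => ‖q - x‖⁻¹ • (q - x)) :=
  ((measurable_const.sub measurable_id).norm.inv).smul (measurable_const.sub measurable_id)

lemma aux_integrable_inner_dir (q ξ : EuclideanSpace ℝ (Fin n)) (hξ : ‖ξ‖ = 1) :
    Integrable (fun x => (inner ℝ (‖q - x‖⁻¹ • (q - x)) ξ : ℝ)) μ := by
  refine Integrable.mono' (integrable_const (1:ℝ)) ?_ ?_
  · exact ((aux_meas_dir q).inner measurable_const).aestronglyMeasurable
  · refine Filter.Eventually.of_forall fun x => ?_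
    calc ‖(inner ℝ (‖q - x‖⁻¹ • (q - x)) ξ : ℝ)‖ ≤ ‖‖q - x‖⁻¹ • (q - x)‖ * ‖ξ‖ :=
          norm_inner_le_norm _ _
      _ ≤ 1 * 1 := by
          exact mul_le_mul (norm_dir_le _) (le_of_eq hξ) (norm_nonneg _) zero_le_one
      _ = 1 := one_mul 1

end Aux

section Key

set_option linter.unusedSectionVars false

variable {n : ℕ} (μ : Measure (EuclideanSpace ℝ (Fin n))) [IsProbabilityMeasure μ]

lemma key_lb (hnorm : Integrable (fun x => ‖x‖) μ)
    (ξ : EuclideanSpace ℝ (Fin n)) (hξ : ‖ξ‖ = 1) (b : ℝ)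
    (q : EuclideanSpace ℝ (Fin n))
    (hq : ∀ p, ∫ x, quantileLoss (b • ξ) x q ∂μ ≤ ∫ x, quantileLoss (b • ξ) x p ∂μ) :
    b - (μ {q}).toReal ≤ ∫ x, (inner ℝ (‖q - x‖⁻¹ • (q - x)) ξ : ℝ) ∂μ := by
  set t : ℕ → ℝ := fun k => ((k : ℝ) + 1)⁻¹ with ht_def
  have ht_pos : ∀ k, 0 < t k := fun k => by positivity
  have ht_lim : Tendsto t atTop (nhds 0) := by
    have : Tendsto (fun n : ℕ => 1 / ((n : ℝ) + 1)) atTop (nhds 0) :=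
      tendsto_one_div_add_atTop_nhds_zero_nat
    simpa [ht_def, one_div] using this
  set g : ℕ → EuclideanSpace ℝ (Fin n) → ℝ :=
    fun k x => (‖q + t k • ξ - x‖ - ‖q - x‖) / t k with hg_def
  set h : EuclideanSpace ℝ (Fin n) → ℝ :=
    fun x => (inner ℝ (‖q - x‖⁻¹ • (q - x)) ξ : ℝ)
      + Set.indicator {q} (fun _ => (1:ℝ)) x with hh_def
  -- Step 1: b ≤ ∫ g k for each k
  have step1 : ∀ k, b ≤ ∫ x, g k x ∂μ := by
    intro k
    have hI1 := aux_integrable_quantileLoss μ hnorm (b • ξ) q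
    have hI2 := aux_integrable_quantileLoss μ hnorm (b • ξ) (q + t k • ξ)
    have hdiff : Integrable (fun x => ‖q + t k • ξ - x‖ - ‖q - x‖) μ :=
      ((aux_integrable_sub μ hnorm (q + t k • ξ)).norm).sub
        ((aux_integrable_sub μ hnorm q).norm)
    have hpt : ∀ x, quantileLoss (b • ξ) x (q + t k • ξ) - quantileLoss (b • ξ) x q
        = (‖q + t k • ξ - x‖ - ‖q - x‖) - b * t k := by
      intro x
      unfold quantileLoss
      have : (inner ℝ (b • ξ) (q + t k • ξ - x) : ℝ) - inner ℝ (b • ξ) (q - x)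
          = b * t k := by
        rw [← inner_sub_right]
        have : q + t k • ξ - x - (q - x) = t k • ξ := by abel
        rw [this, real_inner_smul_left, real_inner_smul_right,
          real_inner_self_eq_norm_sq, hξ]
        ring
      linarith [this]
    have hI12 : Integrable (fun x => quantileLoss (b • ξ) x (q + t k • ξ)
        - quantileLoss (b • ξ) x q) μ := by exact hI2.sub hI1
    have hint_eq : ∫ x, (‖q + t k • ξ - x‖ - ‖q - x‖) ∂μ
        = (∫ x, quantileLoss (b • ξ) x (q + t k • ξ) ∂μ)
          - (∫ x, quantileLoss (b • ξ) x q ∂μ) + b * t k := by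
      rw [← integral_sub hI2 hI1]
      have hcg : ∀ x, (‖q + t k • ξ - x‖ - ‖q - x‖)
          = (quantileLoss (b • ξ) x (q + t k • ξ) - quantileLoss (b • ξ) x q) + b * t k := by
        intro x; linarith [hpt x]
      rw [integral_congr_ae (Filter.Eventually.of_forall hcg),
        integral_add hI12 (integrable_const _), integral_const]
      simp
    have hge : b * t k ≤ ∫ x, (‖q + t k • ξ - x‖ - ‖q - x‖) ∂μ := by
      rw [hint_eq]
      have := hq (q + t k • ξ)
      linarith
    have : ∫ x, g k x ∂μ = (∫ x, (‖q + t k • ξ - x‖ - ‖q - x‖) ∂μ) / t k := by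
      rw [hg_def, integral_div]
    rw [this, le_div_iff₀ (ht_pos k)]
    linarith [hge]
  -- Step 2: dominated convergence
  have hmeas_g : ∀ k, AEStronglyMeasurable (g k) μ := by
    intro k
    apply Continuous.aestronglyMeasurable
    exact ((continuous_const.sub continuous_id).norm.sub
      (continuous_const.sub continuous_id).norm).div_const _
  have hbd : ∀ k, ∀ᵐ x ∂μ, ‖g k x‖ ≤ (1:ℝ) := by
    intro k
    refine Filter.Eventually.of_forall fun x => ?_
    rw [hg_def]
    have h1 : |‖q + t k • ξ - x‖ - ‖q - x‖| ≤ ‖t k • ξ‖ := by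
      have := abs_norm_sub_norm_le (q + t k • ξ - x) (q - x)
      have heq : q + t k • ξ - x - (q - x) = t k • ξ := by abel
      rwa [heq] at this
    have h2 : ‖t k • ξ‖ = t k := by
      rw [norm_smul, hξ, mul_one, Real.norm_eq_abs, abs_of_pos (ht_pos k)]
    rw [Real.norm_eq_abs, abs_div, abs_of_pos (ht_pos k), div_le_one (ht_pos k)]
    rw [h2] at h1; exact h1
  have hptlim : ∀ x, Tendsto (fun k => g k x) atTop (nhds (h x)) := by
    intro x
    rcases eq_or_ne x q with hxq | hxq
    · have hgk : ∀ k, g k x = 1 := by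
        intro k
        rw [hg_def]
        simp only [hxq]
        have h1 : q + t k • ξ - q = t k • ξ := by abel
        rw [h1, sub_self, norm_zero, sub_zero, norm_smul, hξ, mul_one,
          Real.norm_eq_abs, abs_of_pos (ht_pos k), div_self (ht_pos k).ne']
      have hhx : h x = 1 := by
        rw [hh_def]
        simp [hxq, sub_self]
      rw [hhx]
      simp only [hgk]
      exact tendsto_const_nhds
    · set v : EuclideanSpace ℝ (Fin n) := q - x with hv_def
      have hv : v ≠ 0 := sub_ne_zero.mpr (Ne.symm hxq)
      have hvnorm : (0:ℝ) < ‖v‖ := norm_pos_iff.mpr hv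
      have hgk : ∀ k, g k x = (2 * inner ℝ v ξ + t k) / (‖v + t k • ξ‖ + ‖v‖) := by
        intro k
        have hden : (0:ℝ) < ‖v + t k • ξ‖ + ‖v‖ := by positivity
        have hsq : ‖v + t k • ξ‖ ^ 2 - ‖v‖ ^ 2 = t k * (2 * inner ℝ v ξ + t k) := by
          rw [norm_add_sq_real, real_inner_smul_right, norm_smul, hξ, mul_one,
            Real.norm_eq_abs, abs_of_pos (ht_pos k)]
          ring
        have hfac : (‖v + t k • ξ‖ - ‖v‖) * (‖v + t k • ξ‖ + ‖v‖)
            = t k * (2 * inner ℝ v ξ + t k) := by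
          rw [← hsq]; ring
        have hnum : ‖q + t k • ξ - x‖ - ‖q - x‖ = ‖v + t k • ξ‖ - ‖v‖ := by
          rw [hv_def]
          congr 2
          abel
        simp only [hg_def]
        rw [hnum, div_eq_div_iff (ht_pos k).ne' hden.ne']
        linarith [hfac]
      have hhx : h x = 2 * inner ℝ v ξ / (‖v + (0:ℝ) • ξ‖ + ‖v‖) := by
        simp only [hh_def]
        have : Set.indicator {q} (fun _ => (1:ℝ)) x = 0 := by
          apply Set.indicator_of_notMem
          simpa using hxq
        rw [this, add_zero, zero_smul, add_zero, real_inner_smul_left, hv_def]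
        field_simp
        ring
      rw [hhx]
      simp only [hgk]
      have hcont : Tendsto (fun s : ℝ => (2 * inner ℝ v ξ + s) / (‖v + s • ξ‖ + ‖v‖))
          (nhds 0) (nhds ((2 * inner ℝ v ξ + 0) / (‖v + (0:ℝ) • ξ‖ + ‖v‖))) := by
        apply ContinuousAt.tendsto
        apply ContinuousAt.div
        · exact (continuous_const.add continuous_id).continuousAt
        · exact ((continuous_const.add (continuous_id.smul continuous_const)).norm.add
            continuous_const).continuousAt
        · have : v + (0:ℝ) • ξ = v := by simp
          rw [this]
          positivity
      have := hcont.comp ht_lim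
      simpa [Function.comp_def] using this
  -- Step 3: conclude
  have hIinner := aux_integrable_inner_dir μ q ξ hξ
  have hIind : Integrable (Set.indicator {q} (fun _ => (1:ℝ))) μ :=
    (integrable_const (1:ℝ)).indicator (measurableSet_singleton q)
  have hIh : Integrable h μ := by
    rw [hh_def]; exact hIinner.add hIind
  have step2 : Tendsto (fun k => ∫ x, g k x ∂μ) atTop (nhds (∫ x, h x ∂μ)) :=
    tendsto_integral_of_dominated_convergence (fun _ => (1:ℝ)) hmeas_g
      (integrable_const 1) hbd (Filter.Eventually.of_forall hptlim)
  have hbh : b ≤ ∫ x, h x ∂μ :=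
    le_of_tendsto_of_tendsto tendsto_const_nhds step2
      (Filter.Eventually.of_forall step1)
  have hint_h : ∫ x, h x ∂μ
      = (∫ x, (inner ℝ (‖q - x‖⁻¹ • (q - x)) ξ : ℝ) ∂μ) + (μ {q}).toReal := by
    rw [hh_def, integral_add hIinner hIind,
      integral_indicator_const (1:ℝ) (measurableSet_singleton q)]
    simp [Measure.real]
  rw [hint_h] at hbh
  linarith

end Key

section Atoms

set_option linter.unusedSectionVars false

variable {n : ℕ} (μ : Measure (EuclideanSpace ℝ (Fin n))) [IsProbabilityMeasure μ]

lemma finite_large_atoms (ε : ℝ) (hε : 0 < ε) :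
    {y : EuclideanSpace ℝ (Fin n) | ε ≤ (μ {y}).toReal}.Finite := by
  by_contra hinf
  have hinf : {y : EuclideanSpace ℝ (Fin n) | ε ≤ (μ {y}).toReal}.Infinite := hinf
  set N : ℕ := ⌈ε⁻¹⌉₊ + 1 with hN
  obtain ⟨s, hs_sub, hs_card⟩ := hinf.exists_subset_card_eq N
  have hmeas : ∀ y ∈ s, MeasurableSet ({y} : Set (EuclideanSpace ℝ (Fin n))) :=
    fun y _ => measurableSet_singleton y
  have hdisj : (s : Set (EuclideanSpace ℝ (Fin n))).Pairwise
      (Function.onFun Disjoint fun y => ({y} : Set (EuclideanSpace ℝ (Fin n)))) := by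
    intro a _ b hb hab
    simp only [Function.onFun, Set.disjoint_singleton_left, Set.mem_singleton_iff]
    exact hab
  have hsum : ∑ y ∈ s, μ {y} = μ (⋃ y ∈ s, {y}) :=
    (measure_biUnion_finset hdisj hmeas).symm
  have hle1 : μ (⋃ y ∈ s, {y}) ≤ 1 := by
    rw [← measure_univ (μ := μ)]
    exact measure_mono (Set.subset_univ _)
  have hlow : (N : ENNReal) * ENNReal.ofReal ε ≤ ∑ y ∈ s, μ {y} := by
    calc (N : ENNReal) * ENNReal.ofReal ε = ∑ y ∈ s, ENNReal.ofReal ε := by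
          rw [Finset.sum_const, hs_card, nsmul_eq_mul]
      _ ≤ ∑ y ∈ s, μ {y} := by
          refine Finset.sum_le_sum fun y hy => ?_
          have hy' := hs_sub hy
          have : ε ≤ (μ {y}).toReal := hy'
          have hfin : μ {y} ≠ ⊤ := measure_ne_top μ _
          rw [← ENNReal.ofReal_toReal hfin]
          exact ENNReal.ofReal_le_ofReal this
  have hNle : (N : ENNReal) * ENNReal.ofReal ε ≤ 1 := le_trans hlow (hsum ▸ hle1)
  have hreal : (N : ℝ) * ε ≤ 1 := by
    have := ENNReal.toReal_mono (by simp) hNle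
    rw [ENNReal.toReal_mul] at this
    simpa [ENNReal.toReal_ofReal hε.le] using this
  have h1 : (N : ℝ) ≤ ε⁻¹ := by
    rw [← le_div_iff₀ hε] at hreal
    rwa [one_div] at hreal
  have h2 : ε⁻¹ < (N : ℝ) := by
    rw [hN]
    push_cast
    calc ε⁻¹ ≤ (⌈ε⁻¹⌉₊ : ℝ) := Nat.le_ceil _
      _ < (⌈ε⁻¹⌉₊ : ℝ) + 1 := by linarith
  linarith

end Atoms

/-- Euclidean case of Theorem 6.1(c): along any sequence `β_m → 1⁻`, the unit vector
from a data point `x` towards the `(β_m ξ)`-quantile `q_m` converges to `ξ` in mean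
square.  (Here `(q_m − x)/‖q_m − x‖` is interpreted as `0` when `x = q_m`, which is the
convention built into `‖q_m − x‖⁻¹ • (q_m − x)`.) -/
theorem extreme_quantiles_direction_L2
    {n : ℕ} (μ : Measure (EuclideanSpace ℝ (Fin n))) [IsProbabilityMeasure μ]
    (hμint : ∃ (u₀ p₀ : EuclideanSpace ℝ (Fin n)), ‖u₀‖ < 1 ∧
      Integrable (fun x => quantileLoss u₀ x p₀) μ)
    (ξ : EuclideanSpace ℝ (Fin n)) (hξ : ‖ξ‖ = 1)
    (hsupp : ¬ ∃ p : EuclideanSpace ℝ (Fin n),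
      measSupport μ ⊆ {y | ∃ t : ℝ, y = p + t • ξ})
    (β : ℕ → ℝ) (hβ : ∀ m, β m ∈ Set.Ico (0 : ℝ) 1)
    (hβlim : Tendsto β atTop (nhds 1))
    (q : ℕ → EuclideanSpace ℝ (Fin n))
    (hq : ∀ m, ∀ p, ∫ x, quantileLoss (β m • ξ) x (q m) ∂μ
        ≤ ∫ x, quantileLoss (β m • ξ) x p ∂μ) :
    Tendsto (fun m => ∫ x, ‖‖q m - x‖⁻¹ • (q m - x) - ξ‖ ^ 2 ∂μ) atTop (nhds 0) := by
  have hnorm := aux_integrable_norm μ hμint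
  have hK : ∀ m, β m - (μ {q m}).toReal
      ≤ ∫ x, (inner ℝ (‖q m - x‖⁻¹ • (q m - x)) ξ : ℝ) ∂μ :=
    fun m => key_lb μ hnorm ξ hξ (β m) (q m) (hq m)
  -- Step C: atom masses tend to zero
  have hatom : Tendsto (fun m => (μ {q m}).toReal) atTop (nhds 0) := by
    by_contra hcon
    rw [Metric.tendsto_atTop] at hcon
    push_neg at hcon
    obtain ⟨ε, hε, hfreq⟩ := hcon
    have hfreq' : ∀ N, ∃ m, N ≤ m ∧ ε ≤ (μ {q m}).toReal := by
      intro N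
      obtain ⟨m, hm, hd⟩ := hfreq N
      refine ⟨m, hm, ?_⟩
      rwa [Real.dist_eq, sub_zero, abs_of_nonneg ENNReal.toReal_nonneg] at hd
    set S := {y : EuclideanSpace ℝ (Fin n) | ε ≤ (μ {y}).toReal} with hS
    have hSfin : S.Finite := finite_large_atoms μ ε hε
    have hinf : {m | q m ∈ S}.Infinite := by
      rw [← Nat.frequently_atTop_iff_infinite, frequently_atTop]
      exact hfreq'
    have hpig : ∃ y ∈ S, {m | q m = y}.Infinite := by
      by_contra hno
      push_neg at hno
      have hfib : ∀ y ∈ S, {m | q m = y}.Finite :=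
        fun y hy => hno y hy
      have hsub : {m | q m ∈ S} ⊆ ⋃ y ∈ S, {m | q m = y} :=
        fun m hm => Set.mem_biUnion hm rfl
      exact hinf ((hSfin.biUnion hfib).subset hsub)
    obtain ⟨y, hyS, hyinf⟩ := hpig
    set c : ℝ := ∫ x, (inner ℝ (‖y - x‖⁻¹ • (y - x)) ξ : ℝ) ∂μ with hc
    -- lower bound 1 - a ≤ c
    have hlow : 1 - (μ {y}).toReal ≤ c := by
      refine le_of_forall_pos_le_add fun δ hδ => ?_
      have hev : ∀ᶠ m in atTop, 1 - δ < β m :=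
        hβlim.eventually (eventually_gt_nhds (by linarith))
      have hfr : ∃ᶠ m in atTop, q m = y := Nat.frequently_atTop_iff_infinite.mpr hyinf
      obtain ⟨m, hmq, hmβ⟩ := (hfr.and_eventually hev).exists
      have hKm := hK m
      rw [hmq] at hKm
      linarith
    have hIdy : Integrable (fun x => (inner ℝ (‖y - x‖⁻¹ • (y - x)) ξ : ℝ)) μ :=
      aux_integrable_inner_dir μ y ξ hξ
    have hIind : Integrable (Set.indicator {y} (fun _ => (1:ℝ))) μ :=
      (integrable_const (1:ℝ)).indicator (measurableSet_singleton y)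
    set F : EuclideanSpace ℝ (Fin n) → ℝ :=
      fun x => (1 - Set.indicator {y} (fun _ => (1:ℝ)) x)
        - (inner ℝ (‖y - x‖⁻¹ • (y - x)) ξ : ℝ) with hF
    have hFnn : 0 ≤ F := by
      intro x
      rcases eq_or_ne x y with h | h
      · simp only [hF, Pi.zero_apply, h]
        simp
      · have hind : Set.indicator {y} (fun _ => (1:ℝ)) x = 0 :=
          Set.indicator_of_notMem (by simpa using h) _
        have hle : (inner ℝ (‖y - x‖⁻¹ • (y - x)) ξ : ℝ) ≤ 1 := by
          calc (inner ℝ (‖y - x‖⁻¹ • (y - x)) ξ : ℝ) ≤ ‖‖y - x‖⁻¹ • (y - x)‖ * ‖ξ‖ :=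
              real_inner_le_norm _ _
            _ ≤ 1 * 1 := mul_le_mul (norm_dir_le _) hξ.le (norm_nonneg _) zero_le_one
            _ = 1 := one_mul 1
        simp only [hF, Pi.zero_apply, hind]
        linarith
    have hFint : Integrable F μ := by
      rw [hF]
      exact ((integrable_const (1:ℝ)).sub hIind).sub hIdy
    have hI1 : Integrable (fun x => 1 - Set.indicator {y} (fun _ => (1:ℝ)) x) μ := by
      exact (integrable_const (1:ℝ)).sub hIind
    have hFint_eq : ∫ x, F x ∂μ = 1 - (μ {y}).toReal - c := by
      simp only [hF]
      rw [integral_sub hI1 hIdy, integral_sub (integrable_const (1:ℝ)) hIind,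
        integral_indicator_const (1:ℝ) (measurableSet_singleton y), integral_const]
      simp [hc, Measure.real]
    have hF0 : ∫ x, F x ∂μ = 0 :=
      le_antisymm (by rw [hFint_eq]; linarith) (integral_nonneg hFnn)
    have haeF : F =ᵐ[μ] 0 := (integral_eq_zero_iff_of_nonneg hFnn hFint).mp hF0
    set L : Set (EuclideanSpace ℝ (Fin n)) := {z | ∃ t : ℝ, z = y + t • ξ} with hL
    have haeL : ∀ᵐ x ∂μ, x ∈ L := by
      filter_upwards [haeF] with x hx
      rcases eq_or_ne x y with h | h
      · exact ⟨0, by simp [h]⟩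
      · have hind : Set.indicator {y} (fun _ => (1:ℝ)) x = 0 :=
          Set.indicator_of_notMem (by simpa using h) _
        have hFx : F x = 0 := hx
        have hinner1 : (inner ℝ (‖y - x‖⁻¹ • (y - x)) ξ : ℝ) = 1 := by
          simp only [hF, hind] at hFx
          linarith
        have hvy : y - x ≠ 0 := sub_ne_zero.mpr (Ne.symm h)
        have hn1 : ‖‖y - x‖⁻¹ • (y - x)‖ = 1 := by
          rw [norm_smul, norm_inv, norm_norm,
            inv_mul_cancel₀ (norm_ne_zero_iff.mpr hvy)]
        have hdxi : ‖y - x‖⁻¹ • (y - x) = ξ :=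
          (inner_eq_one_iff_of_norm_eq_one hn1 hξ).mp hinner1
        have hvx : y - x = ‖y - x‖ • ξ := by
          have h2 := congrArg (fun z : EuclideanSpace ℝ (Fin n) => ‖y - x‖ • z) hdxi
          simpa [smul_smul, mul_inv_cancel₀ (norm_ne_zero_iff.mpr hvy)] using h2
        refine ⟨-‖y - x‖, ?_⟩
        rw [neg_smul, ← hvx]
        abel
    have hLclosed : IsClosed L := by
      have hLeq : L = (fun z => z - y) ⁻¹' ((Submodule.span ℝ {ξ} :
          Submodule ℝ (EuclideanSpace ℝ (Fin n))) : Set (EuclideanSpace ℝ (Fin n))) := by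
        ext z
        simp only [hL, Set.mem_setOf_eq, Set.mem_preimage, SetLike.mem_coe,
          Submodule.mem_span_singleton]
        constructor
        · rintro ⟨t, rfl⟩; exact ⟨t, by abel⟩
        · rintro ⟨t, ht⟩; exact ⟨t, by rw [ht]; abel⟩
      rw [hLeq]
      exact (Submodule.closed_of_finiteDimensional _).preimage
        (continuous_id.sub continuous_const)
    have hnull : μ Lᶜ = 0 := by
      have := haeL
      rw [ae_iff] at this
      exact this
    exact hsupp ⟨y, fun z hz => by
      by_contra hzL
      exact hz Lᶜ (hLclosed.isOpen_compl.mem_nhds hzL) hnull⟩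
  -- squeeze
  have hIdm : ∀ m, Integrable (fun x => (inner ℝ (‖q m - x‖⁻¹ • (q m - x)) ξ : ℝ)) μ :=
    fun m => aux_integrable_inner_dir μ (q m) ξ hξ
  have hIsq : ∀ m, Integrable (fun x => ‖‖q m - x‖⁻¹ • (q m - x) - ξ‖ ^ 2) μ := by
    intro m
    refine Integrable.mono' (integrable_const (4:ℝ)) ?_ ?_
    · exact ((((aux_meas_dir (q m)).sub measurable_const).norm).pow measurable_const).aestronglyMeasurable
    · refine Filter.Eventually.of_forall fun x => ?_
      have h1 : ‖‖q m - x‖⁻¹ • (q m - x) - ξ‖ ≤ 2 := by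
        calc ‖‖q m - x‖⁻¹ • (q m - x) - ξ‖ ≤ ‖‖q m - x‖⁻¹ • (q m - x)‖ + ‖ξ‖ :=
            norm_sub_le _ _
          _ ≤ 1 + 1 := add_le_add (norm_dir_le _) hξ.le
          _ = 2 := by norm_num
      rw [Real.norm_eq_abs, abs_of_nonneg (by positivity)]
      nlinarith [norm_nonneg (‖q m - x‖⁻¹ • (q m - x) - ξ)]
  have hub : ∀ m, ∫ x, ‖‖q m - x‖⁻¹ • (q m - x) - ξ‖ ^ 2 ∂μ
      ≤ 2 * (1 - β m) + 2 * (μ {q m}).toReal := by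
    intro m
    have hIg : Integrable (fun x => 2 - 2 * (inner ℝ (‖q m - x‖⁻¹ • (q m - x)) ξ : ℝ)) μ :=
      (integrable_const (2:ℝ)).sub ((hIdm m).const_mul 2)
    have hpt : ∀ x, ‖‖q m - x‖⁻¹ • (q m - x) - ξ‖ ^ 2
        ≤ 2 - 2 * (inner ℝ (‖q m - x‖⁻¹ • (q m - x)) ξ : ℝ) := by
      intro x
      have hd := norm_dir_le (q m - x)
      have hexp := norm_sub_sq_real (‖q m - x‖⁻¹ • (q m - x)) ξ
      rw [hξ] at hexp
      nlinarith [norm_nonneg (‖q m - x‖⁻¹ • (q m - x))]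
    have h1 : ∫ x, ‖‖q m - x‖⁻¹ • (q m - x) - ξ‖ ^ 2 ∂μ
        ≤ ∫ x, (2 - 2 * (inner ℝ (‖q m - x‖⁻¹ • (q m - x)) ξ : ℝ)) ∂μ :=
      integral_mono (hIsq m) hIg hpt
    have h2 : ∫ x, (2 - 2 * (inner ℝ (‖q m - x‖⁻¹ • (q m - x)) ξ : ℝ)) ∂μ
        = 2 - 2 * ∫ x, (inner ℝ (‖q m - x‖⁻¹ • (q m - x)) ξ : ℝ) ∂μ := by
      rw [integral_sub (integrable_const (2:ℝ)) ((hIdm m).const_mul 2),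
        integral_const, integral_const_mul]
      simp
    have h3 := hK m
    linarith
  have hlim0 : Tendsto (fun m => 2 * (1 - β m) + 2 * (μ {q m}).toReal) atTop (nhds 0) := by
    have h1 : Tendsto (fun m => 2 * (1 - β m)) atTop (nhds (2 * (1 - 1))) :=
      (tendsto_const_nhds.sub hβlim).const_mul 2
    have h2 : Tendsto (fun m => 2 * (μ {q m}).toReal) atTop (nhds (2 * 0)) :=
      hatom.const_mul 2
    have := h1.add h2
    simpa using this
  refine tendsto_of_tendsto_of_tendsto_of_le_of_le tendsto_const_nhds hlim0
    (fun m => integral_nonneg fun x => by positivity) hub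
end
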